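/- arXiv:2209.08804 — 3 statements merged into one kernel-verified Lean document; each statement's English description precedes it below -/
import Mathlib

section
/- Let G be a 3-edge-connected graph and let v be any vertex of G of degree at least 3. Then there exists a perfect matching M between the neighbours of v and the vertices of the new cycle such that the local cubic modification G_v(M) is 3-edge-connected, even when v is a cut vertex of G. -/
namespace Frank

variable {V : Type*}

/-- An orientation of a simple graph `G`: each edge gets exactly one direction. -/
structure Orient (G : SimpleGraph V) where
  dir : V → V → Prop
  dir_iff : ∀ u v, (dir u v ∨ dir v u) ↔ G.Adj u v
  not_both : ∀ u v, dir u v → ¬ dir v u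

/-- A relation (digraph) is strongly connected. -/
def IsStrong (r : V → V → Prop) : Prop :=
  ∀ x y : V, Relation.ReflTransGen r x y

/-- Delete the single arc `(u,v)` from the digraph `r`. -/
def delArc (r : V → V → Prop) (u v : V) : V → V → Prop :=
  fun a b => r a b ∧ ¬(a = u ∧ b = v)

/-- Delete (both possible arcs of) the edge `uv` from the digraph `r`. -/
def delEdge (r : V → V → Prop) (u v : V) : V → V → Prop :=
  fun a b => r a b ∧ ¬((a = u ∧ b = v) ∨ (a = v ∧ b = u))

/-- The edge `uv` is deletable in the orientation `O`: after removing its arc the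
orientation stays strongly connected. -/
def EdgeDeletable {G : SimpleGraph V} (O : Orient G) (u v : V) : Prop :=
  IsStrong (delEdge O.dir u v)

/-- The Frank number of `G`: the least `k` admitting `k` strongly connected orientations
such that every edge is deletable in at least one of them. -/
noncomputable def frankNumber (G : SimpleGraph V) : ℕ :=
  sInf {k | ∃ Os : Fin k → Orient G, (∀ i, IsStrong (Os i).dir) ∧
    ∀ u v, G.Adj u v → ∃ i, EdgeDeletable (Os i) u v}

/-- `G` is 2-edge-connected: connected and stays connected after deleting any single edge. -/
def TwoEdgeConn (G : SimpleGraph V) : Prop :=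
  G.Connected ∧ ∀ e : Sym2 V, (G.deleteEdges {e}).Connected

/-- `G` is 3-edge-connected: connected and stays connected after deleting any two edges. -/
def ThreeEdgeConn (G : SimpleGraph V) : Prop :=
  G.Connected ∧ ∀ e f : Sym2 V, (G.deleteEdges {e, f}).Connected

/-- The underlying relation of the local cubic modification of `G` at `v`:
`v` is replaced by a cycle on `ZMod d`, and `m` matches the cycle vertices to
the former neighbours of `v`. -/
def lcmRel (G : SimpleGraph V) (v : V) (d : ℕ) (m : ZMod d → V) :
    ({w : V // w ≠ v} ⊕ ZMod d) → ({w : V // w ≠ v} ⊕ ZMod d) → Prop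
  | Sum.inl w, Sum.inl w' => G.Adj w.1 w'.1
  | Sum.inl w, Sum.inr i => w.1 = m i
  | Sum.inr i, Sum.inr j => j = i + 1
  | Sum.inr _, Sum.inl _ => False

/-- The local cubic modification `G_v(M)` of `G` at `v` given the matching `m`. -/
def localCubicMod (G : SimpleGraph V) (v : V) (d : ℕ) (m : ZMod d → V) :
    SimpleGraph ({w : V // w ≠ v} ⊕ ZMod d) :=
  SimpleGraph.fromRel (lcmRel G v d m)


open SimpleGraph

/-- In a preconnected graph, any set containing `x` but not `y` has a crossing edge. -/
lemma cross_of_conn {W : Type*} {K : SimpleGraph W} (hc : K.Preconnected)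
    (S : Set W) {x y : W} (hx : x ∈ S) (hy : y ∉ S) :
    ∃ a b, K.Adj a b ∧ a ∈ S ∧ b ∉ S := by
  obtain ⟨p⟩ := hc x y
  obtain ⟨dd, _, h1, h2⟩ := p.exists_boundary_dart S hx hy
  exact ⟨dd.toProd.1, dd.toProd.2, dd.adj, h1, h2⟩

/-- 3-edge-connectivity gives, for any cut, a crossing edge avoiding two given edges. -/
lemma three_cross {G : SimpleGraph V} (h3 : ThreeEdgeConn G) (SG : Set V) {x y : V}
    (hx : x ∈ SG) (hy : y ∉ SG) (e f : Sym2 V) :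
    ∃ a b, G.Adj a b ∧ a ∈ SG ∧ b ∉ SG ∧ s(a, b) ≠ e ∧ s(a, b) ≠ f := by
  obtain ⟨a, b, hab, ha, hb⟩ := cross_of_conn ((h3.2 e f).preconnected) SG hx hy
  rw [SimpleGraph.deleteEdges_adj] at hab
  have hne : s(a, b) ∉ ({e, f} : Set (Sym2 V)) := hab.2
  simp only [Set.mem_insert_iff, Set.mem_singleton_iff, not_or] at hne
  exact ⟨a, b, hab.1, ha, hb, hne.1, hne.2⟩

/-- Criterion for 3-edge-connectivity via crossing edges. -/
lemma threeEdgeConn_of_cross {W : Type*} [Nonempty W] {H : SimpleGraph W}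
    (h : ∀ (S : Set W) (x y : W), x ∈ S → y ∉ S → ∀ e f : Sym2 W,
      ∃ a b, H.Adj a b ∧ a ∈ S ∧ b ∉ S ∧ s(a, b) ≠ e ∧ s(a, b) ≠ f) :
    ThreeEdgeConn H := by
  have key : ∀ e f : Sym2 W, (H.deleteEdges {e, f}).Preconnected := by
    intro e f x y
    by_contra hxy
    obtain ⟨a, b, hab, ha, hb, he, hf⟩ :=
      h {z | (H.deleteEdges {e, f}).Reachable x z} x y (Reachable.refl x) hxy e f
    exact hb (ha.trans (SimpleGraph.Adj.reachable (by
      rw [SimpleGraph.deleteEdges_adj]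
      exact ⟨hab, by simp [he, hf]⟩)))
  constructor
  · rw [connected_iff]
    refine ⟨?_, inferInstance⟩
    intro x y
    exact ((key s(x,x) s(x,x)) x y).mono (by apply SimpleGraph.deleteEdges_le)
  · intro e f
    rw [connected_iff]
    exact ⟨key e f, inferInstance⟩

/-- A sign change exists between two points where a predicate differs. -/
lemma chgNat (Q : ℕ → Prop) : ∀ b a, a < b → ¬(Q a ↔ Q b) →
    ∃ k, a ≤ k ∧ k < b ∧ ¬(Q k ↔ Q (k + 1)) := by
  intro b
  induction b with
  | zero => intro a h; omega
  | succ n ih =>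
    intro a hab hne
    rcases Nat.lt_or_ge a n with h | h
    · by_cases hn : Q a ↔ Q n
      · exact ⟨n, by omega, by omega, fun hh => hne (hn.trans hh)⟩
      · obtain ⟨k, h1, h2, h3⟩ := ih a h hn
        exact ⟨k, h1, by omega, h3⟩
    · have : a = n := by omega
      subst this
      exact ⟨a, le_refl a, by omega, hne⟩
lemma hadj_inl_inl {G : SimpleGraph V} {v : V} {d : ℕ} {m : ZMod d → V}
    {w w' : {w : V // w ≠ v}} :
    (localCubicMod G v d m).Adj (Sum.inl w) (Sum.inl w') ↔ G.Adj w.1 w'.1 := by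
  rw [localCubicMod, fromRel_adj]
  constructor
  · rintro ⟨-, h | h⟩
    · exact h
    · exact h.symm
  · intro h
    exact ⟨by simp [Subtype.ext_iff, G.ne_of_adj h], Or.inl h⟩

lemma hadj_inl_inr {G : SimpleGraph V} {v : V} {d : ℕ} {m : ZMod d → V}
    {w : {w : V // w ≠ v}} {i : ZMod d} :
    (localCubicMod G v d m).Adj (Sum.inl w) (Sum.inr i) ↔ w.1 = m i := by
  rw [localCubicMod, fromRel_adj]
  constructor
  · rintro ⟨-, h | h⟩
    · exact h
    · exact h.elim
  · intro h
    exact ⟨by simp, Or.inl h⟩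

lemma hadj_inr_inr {G : SimpleGraph V} {v : V} {d : ℕ} {m : ZMod d → V}
    {i j : ZMod d} :
    (localCubicMod G v d m).Adj (Sum.inr i) (Sum.inr j) ↔ i ≠ j ∧ (j = i + 1 ∨ i = j + 1) := by
  rw [localCubicMod, fromRel_adj]
  simp only [ne_eq, Sum.inr.injEq, lcmRel]

lemma hadj_inr_inl {G : SimpleGraph V} {v : V} {d : ℕ} {m : ZMod d → V}
    {w : {w : V // w ≠ v}} {i : ZMod d} :
    (localCubicMod G v d m).Adj (Sum.inr i) (Sum.inl w) ↔ w.1 = m i :=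
  (localCubicMod G v d m).adj_comm _ _ |>.trans hadj_inl_inr

lemma two_ne_zero' {d : ℕ} (hd : 3 ≤ d) : (2 : ZMod d) ≠ 0 := by
  haveI : NeZero d := ⟨by omega⟩
  intro h
  have : ((2 : ℕ) : ZMod d) = 0 := by push_cast; exact h
  rw [ZMod.natCast_eq_zero_iff] at this
  have := Nat.le_of_dvd (by norm_num) this
  omega

lemma one_ne_zero' {d : ℕ} (hd : 3 ≤ d) : (1 : ZMod d) ≠ 0 := by
  haveI : NeZero d := ⟨by omega⟩
  intro h
  have : ((1 : ℕ) : ZMod d) = 0 := by push_cast; exact h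
  rw [ZMod.natCast_eq_zero_iff] at this
  have := Nat.le_of_dvd (by norm_num) this
  omega

/-- Distinct change points give distinct cycle edge values. -/
lemma cyc_ne {d : ℕ} (hd : 3 ≤ d) {z1 z2 : ZMod d} (h : z1 ≠ z2)
    {W0 : Type*} :
    s(Sum.inr z1, Sum.inr (z1+1)) ≠ (s(Sum.inr z2, Sum.inr (z2+1)) : Sym2 (W0 ⊕ ZMod d)) := by
  intro hs
  rw [Sym2.eq_iff] at hs
  rcases hs with ⟨h1, h2⟩ | ⟨h1, h2⟩
  · exact h (Sum.inr.inj h1)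
  · have e1 : z1 = z2 + 1 := Sum.inr.inj h1
    have e2 : z1 + 1 = z2 := Sum.inr.inj h2
    have h2z : (2 : ZMod d) = 0 := by linear_combination e2 - e1
    exact two_ne_zero' hd h2z

/-- Three distinct values cannot all lie in a two-element "set". -/
lemma pigeon3 {α : Type*} {v1 v2 v3 e f : α} (h12 : v1 ≠ v2) (h13 : v1 ≠ v3) (h23 : v2 ≠ v3)
    (h1 : v1 = e ∨ v1 = f) (h2 : v2 = e ∨ v2 = f) (h3 : v3 = e ∨ v3 = f) : False := by
  rcases h1 with h1 | h1 <;> rcases h2 with h2 | h2 <;> rcases h3 with h3 | h3 <;> simp_all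


/-- If the cut contains no cycle vertex, contradiction with 3-edge-connectivity of G. -/
lemma case1 {G : SimpleGraph V} (h3 : ThreeEdgeConn G) {v : V} {d : ℕ} {m : ZMod d → V}
    (hmr : Set.range m = G.neighborSet v)
    (S : Set ({w : V // w ≠ v} ⊕ ZMod d)) (e f : Sym2 ({w : V // w ≠ v} ⊕ ZMod d))
    (hcr : ∀ a b, (localCubicMod G v d m).Adj a b → a ∈ S → b ∉ S →
      s(a, b) = e ∨ s(a, b) = f)
    (hempty : ∀ i : ZMod d, Sum.inr i ∉ S)
    (w : {w : V // w ≠ v}) (hw : Sum.inl w ∈ S) : False := by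
  classical
  set π : ({w : V // w ≠ v} ⊕ ZMod d) → V := Sum.elim Subtype.val (fun _ => v) with hπ
  set SG : Set V := {x | ∃ h : x ≠ v, Sum.inl ⟨x, h⟩ ∈ S} with hSG
  have hxS : w.1 ∈ SG := ⟨w.2, by simpa using hw⟩
  have hvS : v ∉ SG := by rintro ⟨h, -⟩; exact h rfl
  obtain ⟨a, b, hab, ha, hb, he, hf⟩ := three_cross h3 SG hxS hvS (e.map π) (f.map π)
  obtain ⟨hav, haS⟩ := ha
  by_cases hbv : b = v
  · have hab' : G.Adj a v := hbv ▸ hab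
    have hmem : a ∈ G.neighborSet v := by simpa using hab'.symm
    rw [← hmr] at hmem
    obtain ⟨i, hi⟩ := hmem
    have hadj : (localCubicMod G v d m).Adj (Sum.inl ⟨a, hav⟩) (Sum.inr i) :=
      hadj_inl_inr.2 hi.symm
    have := hcr _ _ hadj haS (hempty i)
    rcases this with h | h
    · exact he (by rw [← h, Sym2.map_pair_eq, hbv]; rfl)
    · exact hf (by rw [← h, Sym2.map_pair_eq, hbv]; rfl)
  · have hadj : (localCubicMod G v d m).Adj (Sum.inl ⟨a, hav⟩) (Sum.inl ⟨b, hbv⟩) :=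
      hadj_inl_inl.2 hab
    have hbS : Sum.inl (⟨b, hbv⟩ : {w : V // w ≠ v}) ∉ S := fun hmem => hb ⟨hbv, hmem⟩
    have := hcr _ _ hadj haS hbS
    rcases this with h | h
    · exact he (by rw [← h, Sym2.map_pair_eq]; rfl)
    · exact hf (by rw [← h, Sym2.map_pair_eq]; rfl)

/-- Build the matching: a bijection from `ZMod d` to the neighbours (as subtype elements)
such that any two distinct components have "interleaved" representatives. -/
lemma build_m {G : SimpleGraph V} (h3 : ThreeEdgeConn G) (v : V) (d : ℕ)
    (hd3 : 3 ≤ d) (hdeg : (G.neighborSet v).ncard = d) :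
    ∃ m0 : ZMod d → {w : V // w ≠ v},
      Function.Injective m0 ∧
      Set.range (fun i => (m0 i).1) = G.neighborSet v ∧
      (∀ i j : ZMod d,
        (G.comap (Subtype.val : {w : V // w ≠ v} → V)).connectedComponentMk (m0 i) ≠
        (G.comap Subtype.val).connectedComponentMk (m0 j) →
        ∃ a b c e : ℕ, a < b ∧ b < c ∧ c < e ∧ e < d ∧
          (G.comap (Subtype.val : {w : V // w ≠ v} → V)).connectedComponentMk (m0 (a : ZMod d)) =
            (G.comap Subtype.val).connectedComponentMk (m0 (c : ZMod d)) ∧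
          (G.comap Subtype.val).connectedComponentMk (m0 (b : ZMod d)) =
            (G.comap Subtype.val).connectedComponentMk (m0 (e : ZMod d)) ∧
          ((G.comap Subtype.val).connectedComponentMk (m0 (a : ZMod d)) =
              (G.comap Subtype.val).connectedComponentMk (m0 i) ∨
            (G.comap Subtype.val).connectedComponentMk (m0 (a : ZMod d)) =
              (G.comap Subtype.val).connectedComponentMk (m0 j)) ∧
          ((G.comap Subtype.val).connectedComponentMk (m0 (b : ZMod d)) =
              (G.comap Subtype.val).connectedComponentMk (m0 i) ∨
            (G.comap Subtype.val).connectedComponentMk (m0 (b : ZMod d)) =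
              (G.comap Subtype.val).connectedComponentMk (m0 j)) ∧
          (G.comap Subtype.val).connectedComponentMk (m0 (a : ZMod d)) ≠
            (G.comap Subtype.val).connectedComponentMk (m0 (b : ZMod d))) := by
  classical
  haveI : NeZero d := ⟨by omega⟩
  set Gv : SimpleGraph {w : V // w ≠ v} := G.comap Subtype.val with hGv
  set cl : {w : V // w ≠ v} → Gv.ConnectedComponent := Gv.connectedComponentMk with hcl
  set Nall : Set {w : V // w ≠ v} := {w | G.Adj v w.1} with hNall
  have himg : Subtype.val '' Nall = G.neighborSet v := by
    ext x
    constructor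
    · rintro ⟨w, hw, rfl⟩; exact hw
    · intro hx
      exact ⟨⟨x, (G.ne_of_adj hx).symm⟩, hx, rfl⟩
  have hNcard : Nall.ncard = d := by
    rw [← hdeg, ← himg, Set.ncard_image_of_injective _ Subtype.val_injective]
  have hNfin : Nall.Finite := by
    by_contra hinf
    rw [Set.Infinite.ncard hinf] at hNcard
    omega
  set sN : Finset {w : V // w ≠ v} := hNfin.toFinset with hsN
  have hsNcard : sN.card = d := by
    rw [hsN, ← Set.ncard_eq_toFinset_card _ hNfin, hNcard]
  have hmemsN : ∀ w, w ∈ sN ↔ G.Adj v w.1 := by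
    intro w; rw [hsN, Set.Finite.mem_toFinset]; rfl
  -- each neighbour has a partner in the same component
  have hpair : ∀ w ∈ sN, ∃ w', w' ∈ sN ∧ w' ≠ w ∧ cl w' = cl w := by
    intro w hw
    set SG : Set V := {x | ∃ h : x ≠ v, cl ⟨x, h⟩ = cl w} with hSGdef
    have hxS : w.1 ∈ SG := ⟨w.2, by simp⟩
    have hvS : v ∉ SG := by rintro ⟨h, -⟩; exact h rfl
    obtain ⟨a, b, hab, ha, hb, he, -⟩ := three_cross h3 SG hxS hvS s(w.1, v) s(w.1, v)
    obtain ⟨hav, hacl⟩ := ha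
    by_cases hbv : b = v
    · refine ⟨⟨a, hav⟩, ?_, ?_, hacl⟩
      · rw [hmemsN]
        exact (hbv ▸ hab).symm
      · intro hcontra
        apply he
        have : a = w.1 := congrArg Subtype.val hcontra
        rw [this, hbv]
    · exfalso
      apply hb
      have hadj : Gv.Adj ⟨a, hav⟩ ⟨b, hbv⟩ := by
        rw [hGv, SimpleGraph.comap_adj]; exact hab
      refine ⟨hbv, ?_⟩
      rw [← hacl, hcl]
      exact (SimpleGraph.ConnectedComponent.eq.2 hadj.reachable).symm
  have hw0 : Nonempty {w : V // w ≠ v} := by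
    have : sN.Nonempty := Finset.card_pos.mp (by omega)
    exact ⟨this.choose⟩
  obtain ⟨w0⟩ := hw0
  -- partner function
  set p : {w : V // w ≠ v} → {w : V // w ≠ v} := fun w =>
    if h : ∃ w', w' ∈ sN ∧ w' ≠ w ∧ cl w' = cl w then h.choose else w with hp
  have hpspec : ∀ w ∈ sN, p w ∈ sN ∧ p w ≠ w ∧ cl (p w) = cl w := by
    intro w hw
    have h := hpair w hw
    rw [hp]
    simp only [dif_pos h]
    exact h.choose_spec
  -- representatives
  set T : Finset Gv.ConnectedComponent := sN.image cl with hT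
  set r : Gv.ConnectedComponent → {w : V // w ≠ v} := fun c =>
    if h : ∃ w, w ∈ sN ∧ cl w = c then h.choose else w0 with hrdef
  have hrspec : ∀ c ∈ T, r c ∈ sN ∧ cl (r c) = c := by
    intro c hc
    rw [hT, Finset.mem_image] at hc
    obtain ⟨w, hw, hwc⟩ := hc
    have h : ∃ w, w ∈ sN ∧ cl w = c := ⟨w, hw, hwc⟩
    rw [hrdef]
    simp only [dif_pos h]
    exact h.choose_spec
  -- the list
  set tl : List Gv.ConnectedComponent := T.toList with htl
  have htlnd : tl.Nodup := T.nodup_toList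
  have htlmem : ∀ c ∈ tl, c ∈ T := by intro c hc; rwa [htl, Finset.mem_toList] at hc
  set l1 : List {w : V // w ≠ v} := tl.map r with hl1
  set l2 : List {w : V // w ≠ v} := tl.map (fun c => p (r c)) with hl2
  set l3 : List {w : V // w ≠ v} := (sN \ (l1.toFinset ∪ l2.toFinset)).toList with hl3
  set L : List {w : V // w ≠ v} := l1 ++ l2 ++ l3 with hL
  have hl1nd : l1.Nodup := by
    refine List.Nodup.map_on ?_ htlnd
    intro x hx y hy hxy
    rw [← (hrspec x (htlmem x hx)).2, ← (hrspec y (htlmem y hy)).2, hxy]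
  have hl2nd : l2.Nodup := by
    refine List.Nodup.map_on ?_ htlnd
    intro x hx y hy hxy
    have h1 := hrspec x (htlmem x hx)
    have h2 := hrspec y (htlmem y hy)
    have := congrArg cl hxy
    rw [(hpspec _ h1.1).2.2, (hpspec _ h2.1).2.2, h1.2, h2.2] at this
    exact this
  have hl1mem : ∀ z ∈ l1, z ∈ sN := by
    intro z hz
    rw [hl1, List.mem_map] at hz
    obtain ⟨c, hc, rfl⟩ := hz
    exact (hrspec c (htlmem c hc)).1
  have hl2mem : ∀ z ∈ l2, z ∈ sN := by
    intro z hz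
    rw [hl2, List.mem_map] at hz
    obtain ⟨c, hc, rfl⟩ := hz
    exact (hpspec _ (hrspec c (htlmem c hc)).1).1
  have hdisj12 : l1.Disjoint l2 := by
    intro z hz1 hz2
    rw [hl1, List.mem_map] at hz1
    rw [hl2, List.mem_map] at hz2
    obtain ⟨c, hc, hzc⟩ := hz1
    obtain ⟨c', hc', hzc'⟩ := hz2
    have h1 := hrspec c (htlmem c hc)
    have h2 := hrspec c' (htlmem c' hc')
    have hcc : c = c' := by
      rw [← h1.2, hzc, ← hzc', (hpspec _ h2.1).2.2, h2.2]
    rw [← hcc] at hzc'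
    exact (hpspec _ h1.1).2.1 (by rw [hzc', hzc])
  have hl3nd : l3.Nodup := Finset.nodup_toList _
  have hl3mem : ∀ z ∈ l3, z ∈ sN ∧ z ∉ l1.toFinset ∪ l2.toFinset := by
    intro z hz
    rw [hl3, Finset.mem_toList, Finset.mem_sdiff] at hz
    exact hz
  have hLnd : L.Nodup := by
    rw [hL]
    refine List.Nodup.append (List.Nodup.append hl1nd hl2nd hdisj12) hl3nd ?_
    intro z hz hz3
    have := (hl3mem z hz3).2
    rw [List.mem_append] at hz
    rcases hz with hz | hz
    · exact this (Finset.mem_union_left _ (List.mem_toFinset.2 hz))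
    · exact this (Finset.mem_union_right _ (List.mem_toFinset.2 hz))
  have hLFsub : ∀ z ∈ L, z ∈ sN := by
    intro z hz
    rw [hL, List.mem_append, List.mem_append] at hz
    rcases hz with (hz | hz) | hz
    · exact hl1mem z hz
    · exact hl2mem z hz
    · exact (hl3mem z hz).1
  have hLFsup : ∀ z ∈ sN, z ∈ L := by
    intro z hz
    rw [hL, List.mem_append, List.mem_append]
    by_cases hu : z ∈ l1.toFinset ∪ l2.toFinset
    · rw [Finset.mem_union, List.mem_toFinset, List.mem_toFinset] at hu
      rcases hu with hu | hu
      · exact Or.inl (Or.inl hu)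
      · exact Or.inl (Or.inr hu)
    · refine Or.inr ?_
      rw [hl3, Finset.mem_toList, Finset.mem_sdiff]
      exact ⟨hz, hu⟩
  have hLtoF : L.toFinset = sN := by
    ext z
    rw [List.mem_toFinset]
    exact ⟨hLFsub z, hLFsup z⟩
  have hlen : L.length = d := by
    rw [← List.toFinset_card_of_nodup hLnd, hLtoF, hsNcard]
  -- the matching
  set m0 : ZMod d → {w : V // w ≠ v} := fun i => L[i.val]'(by rw [hlen]; exact ZMod.val_lt i)
    with hm0
  have hm0get : ∀ (k : ℕ) (hk : k < d), m0 (k : ZMod d) = L[k]'(by rw [hlen]; exact hk) := by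
    intro k hk
    rw [hm0]
    simp only
    congr 1
    exact ZMod.val_cast_of_lt hk
  have hm0inj : Function.Injective m0 := by
    intro i j hij
    have hv : i.val = j.val := by
      by_contra hne
      have heq : L.get ⟨i.val, by rw [hlen]; exact ZMod.val_lt i⟩ =
          L.get ⟨j.val, by rw [hlen]; exact ZMod.val_lt j⟩ := hij
      exact hne (Fin.val_eq_of_eq (List.nodup_iff_injective_get.1 hLnd heq))
    calc i = ((i.val : ℕ) : ZMod d) := (ZMod.natCast_rightInverse i).symm
    _ = ((j.val : ℕ) : ZMod d) := by rw [hv]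
    _ = j := ZMod.natCast_rightInverse j
  have hm0mem : ∀ i, m0 i ∈ sN := by
    intro i
    apply hLFsub
    rw [hm0]
    exact List.getElem_mem _
  have hm0surj : ∀ z ∈ sN, ∃ i, m0 i = z := by
    intro z hz
    have : z ∈ L := hLFsup z hz
    rw [List.mem_iff_get] at this
    obtain ⟨n, hn⟩ := this
    refine ⟨(n.1 : ZMod d), ?_⟩
    rw [hm0get n.1 (by rw [← hlen]; exact n.2)]
    rw [← hn]
    rfl
  have hrange : Set.range (fun i => (m0 i).1) = G.neighborSet v := by
    rw [← himg]
    ext x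
    constructor
    · rintro ⟨i, rfl⟩
      exact ⟨m0 i, by rw [← Set.Finite.mem_toFinset hNfin]; exact hm0mem i, rfl⟩
    · rintro ⟨w, hw, rfl⟩
      obtain ⟨i, hi⟩ := hm0surj w (by rwa [hsN, Set.Finite.mem_toFinset])
      exact ⟨i, congrArg Subtype.val hi⟩
  -- position computations
  have hl1len : l1.length = tl.length := by rw [hl1]; exact List.length_map _
  have hl2len : l2.length = tl.length := by rw [hl2]; exact List.length_map _
  have h2t : tl.length + tl.length ≤ d := by
    have : L.length = l1.length + l2.length + l3.length := by
      rw [hL]; simp [List.length_append]; omega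
    omega
  have hg1 : ∀ (k : ℕ) (hk : k < tl.length),
      m0 (k : ZMod d) = r (tl[k]'hk) := by
    intro k hk
    have hkd : k < d := by omega
    rw [hm0get k hkd]
    have hk' : k < L.length := by rw [hlen]; exact hkd
    show (l1 ++ l2 ++ l3)[k]'(hL ▸ hk') = _
    rw [List.getElem_append_left (by rw [List.length_append, hl1len, hl2len]; omega)]
    rw [List.getElem_append_left (by rw [hl1len]; omega)]
    simp [hl1]
  have hg2 : ∀ (k : ℕ) (hk : k < tl.length),
      m0 ((tl.length + k : ℕ) : ZMod d) = p (r (tl[k]'hk)) := by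
    intro k hk
    have hkd : tl.length + k < d := by omega
    rw [hm0get _ hkd]
    have hk' : tl.length + k < L.length := by rw [hlen]; exact hkd
    show (l1 ++ l2 ++ l3)[tl.length + k]'(hL ▸ hk') = _
    rw [List.getElem_append_left (by rw [List.length_append, hl1len, hl2len]; omega)]
    rw [List.getElem_append_right (by rw [hl1len]; omega)]
    simp [hl2, hl1len]
  -- the interleaving property
  refine ⟨m0, hm0inj, hrange, ?_⟩
  intro i j hij
  set ci : Gv.ConnectedComponent := cl (m0 i) with hci
  set cj : Gv.ConnectedComponent := cl (m0 j) with hcj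
  have hciT : ci ∈ T := by
    rw [hT, Finset.mem_image]; exact ⟨m0 i, hm0mem i, rfl⟩
  have hcjT : cj ∈ T := by
    rw [hT, Finset.mem_image]; exact ⟨m0 j, hm0mem j, rfl⟩
  have hcitl : ci ∈ tl := by rw [htl, Finset.mem_toList]; exact hciT
  have hcjtl : cj ∈ tl := by rw [htl, Finset.mem_toList]; exact hcjT
  set ai : ℕ := tl.idxOf ci with hai
  set aj : ℕ := tl.idxOf cj with haj
  have hailt : ai < tl.length := List.idxOf_lt_length_iff.2 hcitl
  have hajlt : aj < tl.length := List.idxOf_lt_length_iff.2 hcjtl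
  have hgi : tl[ai]'hailt = ci := List.getElem_idxOf hailt
  have hgj : tl[aj]'hajlt = cj := List.getElem_idxOf hajlt
  have hclai : cl (m0 ((ai : ℕ) : ZMod d)) = ci := by
    rw [hg1 ai hailt, hgi]; exact (hrspec ci hciT).2
  have hclaj : cl (m0 ((aj : ℕ) : ZMod d)) = cj := by
    rw [hg1 aj hajlt, hgj]; exact (hrspec cj hcjT).2
  have hclai2 : cl (m0 ((tl.length + ai : ℕ) : ZMod d)) = ci := by
    rw [hg2 ai hailt, hgi, (hpspec _ (hrspec ci hciT).1).2.2]
    exact (hrspec ci hciT).2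
  have hclaj2 : cl (m0 ((tl.length + aj : ℕ) : ZMod d)) = cj := by
    rw [hg2 aj hajlt, hgj, (hpspec _ (hrspec cj hcjT).1).2.2]
    exact (hrspec cj hcjT).2
  have haij : ai ≠ aj := by
    intro h
    apply hij
    show ci = cj
    rw [← hgi, ← hgj]
    congr 1
  rcases Nat.lt_or_ge ai aj with hlt | hge
  · exact ⟨ai, aj, tl.length + ai, tl.length + aj, hlt, by omega, by omega, by omega,
      by rw [hclai, hclai2], by rw [hclaj, hclaj2],
      Or.inl (by rw [hclai]), Or.inr (by rw [hclaj]),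
      by rw [hclai, hclaj]; exact hij⟩
  · have hlt : aj < ai := by omega
    exact ⟨aj, ai, tl.length + aj, tl.length + ai, hlt, by omega, by omega, by omega,
      by rw [hclaj, hclaj2], by rw [hclai, hclai2],
      Or.inr (by rw [hclaj]), Or.inl (by rw [hclai]),
      by rw [hclaj, hclai]; exact fun h => hij h.symm⟩

lemma sym2_inr_ne_mixed {W0 : Type*} {d : ℕ} {a b : ZMod d} {w : W0} {z : W0 ⊕ ZMod d} :
    s(Sum.inr a, Sum.inr b) ≠ (s(Sum.inl w, z) : Sym2 (W0 ⊕ ZMod d)) := by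
  intro h
  rw [Sym2.eq_iff] at h
  rcases h with ⟨h1, -⟩ | ⟨-, h2⟩ <;> simp_all

theorem stmt_10 (G : SimpleGraph V) (h3 : ThreeEdgeConn G) (v : V) (d : ℕ)
    (hd3 : 3 ≤ d) (hdeg : (G.neighborSet v).ncard = d) :
    ∃ m : ZMod d → V, Function.Injective m ∧ Set.range m = G.neighborSet v ∧
      ThreeEdgeConn (localCubicMod G v d m) := by
  classical
  haveI : NeZero d := ⟨by omega⟩
  obtain ⟨m0, hinj0, hrange, hquad⟩ := build_m h3 v d hd3 hdeg
  set m : ZMod d → V := fun i => (m0 i).1 with hm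
  have hminj : Function.Injective m := fun i j h => hinj0 (Subtype.ext h)
  refine ⟨m, hminj, hrange, ?_⟩
  haveI : Nonempty ({w : V // w ≠ v} ⊕ ZMod d) := ⟨Sum.inr 0⟩
  apply threeEdgeConn_of_cross
  intro S x y hx hy e f
  by_contra hcon
  have hcr : ∀ a b, (localCubicMod G v d m).Adj a b → a ∈ S → b ∉ S →
      s(a, b) = e ∨ s(a, b) = f := by
    intro a b hab ha hb
    by_contra hz
    push_neg at hz
    exact hcon ⟨a, b, hab, ha, hb, hz.1, hz.2⟩
  clear hcon
  by_cases hA1 : ∃ i : ZMod d, Sum.inr i ∈ S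
  · by_cases hA2 : ∃ j : ZMod d, Sum.inr j ∉ S
    · -- main case: the cut meets the cycle properly
      obtain ⟨i0, hi0⟩ := hA1
      obtain ⟨j0, hj0⟩ := hA2
      -- changes give edge values
      have hchgval : ∀ z : ZMod d, ¬((Sum.inr z ∈ S) ↔ (Sum.inr (z+1) ∈ S)) →
          s(Sum.inr z, (Sum.inr (z+1) : {w : V // w ≠ v} ⊕ ZMod d)) = e ∨
          s(Sum.inr z, (Sum.inr (z+1) : {w : V // w ≠ v} ⊕ ZMod d)) = f := by
        intro z hz
        have hne : z ≠ z + 1 := by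
          intro h
          exact one_ne_zero' hd3 (by linear_combination -h)
        have hadj : (localCubicMod G v d m).Adj (Sum.inr z) (Sum.inr (z+1)) :=
          hadj_inr_inr.2 ⟨hne, Or.inl rfl⟩
        by_cases hzs : Sum.inr z ∈ S
        · have hz1 : Sum.inr (z+1) ∉ S := fun hmem => hz ⟨fun _ => hmem, fun _ => hzs⟩
          exact hcr _ _ hadj hzs hz1
        · have hz1 : Sum.inr (z+1) ∈ S := by
            by_contra hmem
            exact hz ⟨fun h => absurd h hzs, fun h => absurd h hmem⟩
          have := hcr _ _ hadj.symm hz1 hzs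
          rcases this with h | h
          · exact Or.inl (by rw [Sym2.eq_swap]; exact h)
          · exact Or.inr (by rw [Sym2.eq_swap]; exact h)
      by_cases hmix : ∃ (w : {w : V // w ≠ v}) (z : {w : V // w ≠ v} ⊕ ZMod d),
          (localCubicMod G v d m).Adj (Sum.inl w) z ∧ ¬((Sum.inl w ∈ S) ↔ (z ∈ S))
      · -- a crossing edge with an old endpoint: two cycle changes suffice
        obtain ⟨w, z, hadj, hnz⟩ := hmix
        have hzval : s(Sum.inl w, z) = e ∨ s(Sum.inl w, z) = f := by
          by_cases hws : Sum.inl w ∈ S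
          · have : z ∉ S := fun hmem => hnz ⟨fun _ => hmem, fun _ => hws⟩
            exact hcr _ _ hadj hws this
          · have hzS : z ∈ S := by
              by_contra hmem
              exact hnz ⟨fun h => absurd h hws, fun h => absurd h hmem⟩
            have := hcr _ _ hadj.symm hzS hws
            rcases this with h | h
            · exact Or.inl (by rw [Sym2.eq_swap]; exact h)
            · exact Or.inr (by rw [Sym2.eq_swap]; exact h)
        -- two distinct changes
        have hij : j0 ≠ i0 := fun h => hj0 (h ▸ hi0)
        have hsub : j0 - i0 ≠ 0 := fun h => hij (by linear_combination h)
        set n1 : ℕ := (j0 - i0).val with hn1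
        have hn1pos : 0 < n1 := Nat.pos_of_ne_zero (fun h => hsub (by
          rwa [ZMod.val_eq_zero] at h))
        have hn1lt : n1 < d := ZMod.val_lt _
        have hQ0 : Sum.inr (i0 + ((0 : ℕ) : ZMod d)) ∈ S := by simpa using hi0
        have hQn1 : Sum.inr (i0 + ((n1 : ℕ) : ZMod d)) ∉ S := by
          rw [hn1, ZMod.natCast_rightInverse]
          simpa using hj0
        obtain ⟨k1, -, hk1lt, hk1⟩ := chgNat (fun n => Sum.inr (i0 + (n : ZMod d)) ∈ S)
          n1 0 hn1pos (fun h => hQn1 (h.1 hQ0))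
        set n2 : ℕ := (i0 - j0).val with hn2
        have hsub2 : i0 - j0 ≠ 0 := fun h => hij (by linear_combination -h)
        have hn2pos : 0 < n2 := Nat.pos_of_ne_zero (fun h => hsub2 (by
          rwa [ZMod.val_eq_zero] at h))
        have hQ0' : Sum.inr (j0 + ((0 : ℕ) : ZMod d)) ∉ S := by simpa using hj0
        have hQn2 : Sum.inr (j0 + ((n2 : ℕ) : ZMod d)) ∈ S := by
          rw [hn2, ZMod.natCast_rightInverse]
          simpa using hi0
        obtain ⟨k2, -, hk2lt, hk2⟩ := chgNat (fun n => Sum.inr (j0 + (n : ZMod d)) ∈ S)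
          n2 0 hn2pos (fun h => hQ0' (h.2 hQn2))
        set z1 : ZMod d := i0 + (k1 : ZMod d) with hz1
        set z2 : ZMod d := j0 + (k2 : ZMod d) with hz2
        have hchg1 : ¬((Sum.inr z1 ∈ S) ↔ (Sum.inr (z1+1) ∈ S)) := by
          intro h
          apply hk1
          constructor
          · intro hh
            have : Sum.inr (z1 + 1) ∈ S := h.1 (by rwa [hz1])
            rwa [hz1, show i0 + ((k1:ℕ) : ZMod d) + 1 = i0 + (((k1+1:ℕ)) : ZMod d) by
              push_cast; ring] at this
          · intro hh
            have : Sum.inr (z1 + 1) ∈ S := by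
              rw [hz1, show i0 + ((k1:ℕ) : ZMod d) + 1 = i0 + (((k1+1:ℕ)) : ZMod d) by
                push_cast; ring]
              exact hh
            have := h.2 this
            rwa [hz1] at this
        have hchg2 : ¬((Sum.inr z2 ∈ S) ↔ (Sum.inr (z2+1) ∈ S)) := by
          intro h
          apply hk2
          constructor
          · intro hh
            have : Sum.inr (z2 + 1) ∈ S := h.1 (by rwa [hz2])
            rwa [hz2, show j0 + ((k2:ℕ) : ZMod d) + 1 = j0 + (((k2+1:ℕ)) : ZMod d) by
              push_cast; ring] at this
          · intro hh
            have : Sum.inr (z2 + 1) ∈ S := by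
              rw [hz2, show j0 + ((k2:ℕ) : ZMod d) + 1 = j0 + (((k2+1:ℕ)) : ZMod d) by
                push_cast; ring]
              exact hh
            have := h.2 this
            rwa [hz2] at this
        have hn12 : n1 + n2 = d := by
          have hneg : i0 - j0 = -(j0 - i0) := by ring
          have hval : n2 = d - n1 := by rw [hn2, hneg, ZMod.neg_val, if_neg hsub, hn1]
          omega
        have hz12 : z1 ≠ z2 := by
          intro h
          have hj0i0 : j0 = i0 + ((n1 : ℕ) : ZMod d) := by
            rw [hn1, ZMod.natCast_rightInverse]; ring
          have heq : ((k1 : ℕ) : ZMod d) = ((n1 + k2 : ℕ) : ZMod d) := by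
            push_cast
            rw [hz1, hz2, hj0i0] at h
            linear_combination h
          have hvals := congrArg ZMod.val heq
          rw [ZMod.val_cast_of_lt (by omega), ZMod.val_cast_of_lt (by omega)] at hvals
          omega
        exact pigeon3 (cyc_ne hd3 hz12) (sym2_inr_ne_mixed) (sym2_inr_ne_mixed)
          (hchgval z1 hchg1) (hchgval z2 hchg2) hzval
      · -- no crossing edge touches an old vertex: use the interleaving property
        push_neg at hmix
        have hreach : ∀ w w' : {w : V // w ≠ v},
            (G.comap (Subtype.val : {w : V // w ≠ v} → V)).Reachable w w' →
            ((Sum.inl w ∈ S) ↔ (Sum.inl w' ∈ S)) := by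
          intro w w' h
          obtain ⟨pw⟩ := h
          induction pw with
          | nil => exact Iff.rfl
          | cons ha pw ih =>
            exact (hmix _ _ (hadj_inl_inl.2 (SimpleGraph.comap_adj.1 ha))).trans ih
        have hmatch : ∀ k : ZMod d, ((Sum.inl (m0 k) ∈ S) ↔ (Sum.inr k ∈ S)) :=
          fun k => hmix (m0 k) (Sum.inr k) (hadj_inl_inr.2 rfl)
        have hvalS : ∀ a b : ZMod d,
            (G.comap (Subtype.val : {w : V // w ≠ v} → V)).connectedComponentMk (m0 a) =
              (G.comap Subtype.val).connectedComponentMk (m0 b) →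
            ((Sum.inr a ∈ S) ↔ (Sum.inr b ∈ S)) := by
          intro a b h
          exact ((hmatch a).symm.trans
            (hreach _ _ (SimpleGraph.ConnectedComponent.eq.1 h))).trans (hmatch b)
        have hnecl : (G.comap (Subtype.val : {w : V // w ≠ v} → V)).connectedComponentMk
            (m0 i0) ≠ (G.comap Subtype.val).connectedComponentMk (m0 j0) := by
          intro h
          exact hj0 ((hvalS i0 j0 h).1 hi0)
        obtain ⟨q1, q2, q3, q4, h12, h23, h34, h4d, hc13, hc24, hc1, hc2, hc12⟩ :=
          hquad i0 j0 hnecl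
        set QS : ℕ → Prop := fun n => Sum.inr ((n : ℕ) : ZMod d) ∈ S with hQS
        have hq13 : QS q1 ↔ QS q3 := hvalS _ _ hc13
        have hq24 : QS q2 ↔ QS q4 := hvalS _ _ hc24
        have hq1 : ¬(QS q1 ↔ QS q2) := by
          rcases hc1 with h1 | h1 <;> rcases hc2 with h2 | h2
          · exact absurd (h1.trans h2.symm) hc12
          · have e1 : QS q1 ↔ Sum.inr i0 ∈ S := hvalS _ i0 h1
            have e2 : QS q2 ↔ Sum.inr j0 ∈ S := hvalS _ j0 h2
            intro hiff
            exact hj0 (e2.1 (hiff.1 (e1.2 hi0)))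
          · have e1 : QS q1 ↔ Sum.inr j0 ∈ S := hvalS _ j0 h1
            have e2 : QS q2 ↔ Sum.inr i0 ∈ S := hvalS _ i0 h2
            intro hiff
            exact hj0 (e1.1 (hiff.2 (e2.2 hi0)))
          · exact absurd (h1.trans h2.symm) hc12
        have hq2 : ¬(QS q2 ↔ QS q3) := fun h => hq1 (h.trans hq13.symm).symm
        have hq3 : ¬(QS q3 ↔ QS q4) := fun h => hq1 (hq13.trans (h.trans hq24.symm))
        obtain ⟨k1, hk1a, hk1b, hk1⟩ := chgNat QS q2 q1 h12 hq1
        obtain ⟨k2, hk2a, hk2b, hk2⟩ := chgNat QS q3 q2 h23 hq2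
        obtain ⟨k3, hk3a, hk3b, hk3⟩ := chgNat QS q4 q3 h34 hq3
        have hcast : ∀ k : ℕ, ((k + 1 : ℕ) : ZMod d) = ((k : ℕ) : ZMod d) + 1 := by
          intro k; push_cast; ring
        have c1 : ¬((Sum.inr ((k1 : ℕ) : ZMod d) ∈ S) ↔
            (Sum.inr (((k1 : ℕ) : ZMod d) + 1) ∈ S)) := by
          rw [← hcast k1]; exact hk1
        have c2 : ¬((Sum.inr ((k2 : ℕ) : ZMod d) ∈ S) ↔
            (Sum.inr (((k2 : ℕ) : ZMod d) + 1) ∈ S)) := by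
          rw [← hcast k2]; exact hk2
        have c3 : ¬((Sum.inr ((k3 : ℕ) : ZMod d) ∈ S) ↔
            (Sum.inr (((k3 : ℕ) : ZMod d) + 1) ∈ S)) := by
          rw [← hcast k3]; exact hk3
        have hb1 : k1 < d := by omega
        have hb2 : k2 < d := by omega
        have hb3 : k3 < d := by omega
        have hne12 : ((k1 : ℕ) : ZMod d) ≠ ((k2 : ℕ) : ZMod d) := by
          intro h
          have := congrArg ZMod.val h
          rw [ZMod.val_cast_of_lt hb1, ZMod.val_cast_of_lt hb2] at this
          omega
        have hne13 : ((k1 : ℕ) : ZMod d) ≠ ((k3 : ℕ) : ZMod d) := by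
          intro h
          have := congrArg ZMod.val h
          rw [ZMod.val_cast_of_lt hb1, ZMod.val_cast_of_lt hb3] at this
          omega
        have hne23 : ((k2 : ℕ) : ZMod d) ≠ ((k3 : ℕ) : ZMod d) := by
          intro h
          have := congrArg ZMod.val h
          rw [ZMod.val_cast_of_lt hb2, ZMod.val_cast_of_lt hb3] at this
          omega
        exact pigeon3 (cyc_ne hd3 hne12) (cyc_ne hd3 hne13) (cyc_ne hd3 hne23)
          (hchgval _ c1) (hchgval _ c2) (hchgval _ c3)
    · -- cycle entirely inside S
      push_neg at hA2
      have hcr' : ∀ a b, (localCubicMod G v d m).Adj a b → a ∈ Sᶜ → b ∉ Sᶜ →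
          s(a, b) = e ∨ s(a, b) = f := by
        intro a b hab ha hb
        have := hcr b a hab.symm (not_not.mp hb) ha
        rcases this with h | h
        · exact Or.inl (by rw [Sym2.eq_swap]; exact h)
        · exact Or.inr (by rw [Sym2.eq_swap]; exact h)
      have hempty : ∀ i : ZMod d, Sum.inr i ∉ Sᶜ := fun i h => h (hA2 i)
      rcases y with w | i
      · exact case1 h3 hrange Sᶜ e f hcr' hempty w hy
      · exact hy (hA2 i)
  · -- cycle entirely outside S
    push_neg at hA1
    have hempty : ∀ i : ZMod d, Sum.inr i ∉ S := hA1
    rcases x with w | i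
    · exact case1 h3 hrange S e f hcr hempty w hx
    · exact hempty i hx

end Frank
end

section
/- Let G be a 3-edge-connected graph and let G_v be a 3-edge-connected local cubic modification of G at a vertex v. Then F(G_v) ≥ F(G), i.e., the Frank number cannot decrease under local cubic modification. -/
namespace Frank

variable {V : Type*}

open Relation

/-- Invariant for partial orientations in the proof of Robbins' theorem. -/
def GoodOn (G : SimpleGraph V) (r : V → V → Prop) (S : Set V) : Prop :=
  (∀ a b, r a b → G.Adj a b) ∧ (∀ a b, r a b → ¬ r b a) ∧
  (∀ a b, r a b → a ∈ S ∧ b ∈ S) ∧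
  (∀ x ∈ S, ∀ y ∈ S, Relation.ReflTransGen r x y)

lemma ear {G H : SimpleGraph V} (hHG : H ≤ G) {r : V → V → Prop} {S : Set V}
    (hg : GoodOn G r S) :
    ∀ {y x : V} (p : H.Walk y x), p.IsPath → x ∈ S →
    ∃ (r' : V → V → Prop) (S' : Set V),
      (∀ a b, r' a b → G.Adj a b) ∧
      (∀ a b, r' a b → ¬ r' b a) ∧
      (∀ a b, r' a b → a ∈ S' ∧ b ∈ S') ∧
      (∀ a b, r a b → r' a b) ∧
      S ⊆ S' ∧
      (∀ a b, r' a b → r a b ∨ (a ∈ p.support ∧ b ∈ p.support ∧ H.Adj a b)) ∧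
      (∀ u ∈ S', ∃ s ∈ S, ReflTransGen r' u s) ∧
      (∀ u ∈ S', ReflTransGen r' y u) ∧
      (∀ w ∈ p.support, w ∈ S') := by
  intro y x p
  induction p with
  | nil =>
    intro _ hx
    refine ⟨r, S, hg.1, hg.2.1, hg.2.2.1, fun a b h => h, subset_rfl,
      fun a b h => Or.inl h,
      fun u hu => ⟨u, hu, ReflTransGen.refl⟩,
      fun u hu => hg.2.2.2 _ hx _ hu, ?_⟩
    intro w hw
    simp only [SimpleGraph.Walk.support_nil, List.mem_singleton] at hw
    subst hw; exact hx
  | @cons y z _ h q ih =>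
    intro hp hx
    rw [SimpleGraph.Walk.cons_isPath_iff] at hp
    obtain ⟨hq, hyq⟩ := hp
    obtain ⟨r₁, S₁, A1, A2, A3, A4, A5, A7, A8, A9, A10⟩ := ih hq hx
    have hzS₁ : z ∈ S₁ := A10 _ q.start_mem_support
    by_cases hyz : y ∈ S ∧ z ∈ S
    · refine ⟨r₁, S₁, A1, A2, A3, A4, A5, ?_, A8, ?_, ?_⟩
      · intro a b hab
        rcases A7 a b hab with h' | ⟨h1, h2, h3⟩
        · exact Or.inl h'
        · exact Or.inr ⟨by simp [SimpleGraph.Walk.support_cons, h1],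
            by simp [SimpleGraph.Walk.support_cons, h2], h3⟩
      · intro u hu
        have h1 : ReflTransGen r₁ y z :=
          ReflTransGen.mono A4 _ _ (hg.2.2.2 _ hyz.1 _ hyz.2)
        exact h1.trans (A9 _ hu)
      · intro w hw
        simp only [SimpleGraph.Walk.support_cons, List.mem_cons] at hw
        rcases hw with rfl | hw
        · exact A5 hyz.1
        · exact A10 _ hw
    · -- add the arc (y, z)
      have hnew : ∀ a b, ((a = y ∧ b = z) ∨ (a = z ∧ b = y)) → ¬ r₁ a b := by
        rintro a b (⟨rfl, rfl⟩ | ⟨rfl, rfl⟩) hab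
        · rcases A7 _ _ hab with h' | ⟨h1, _, _⟩
          · exact hyz ⟨(hg.2.2.1 _ _ h').1, (hg.2.2.1 _ _ h').2⟩
          · exact hyq h1
        · rcases A7 _ _ hab with h' | ⟨_, h2, _⟩
          · exact hyz ⟨(hg.2.2.1 _ _ h').2, (hg.2.2.1 _ _ h').1⟩
          · exact hyq h2
      refine ⟨fun a b => r₁ a b ∨ (a = y ∧ b = z), insert y S₁, ?_, ?_, ?_, ?_, ?_, ?_, ?_, ?_, ?_⟩
      · rintro a b (hab | ⟨rfl, rfl⟩)
        · exact A1 _ _ hab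
        · exact hHG h
      · rintro a b (hab | ⟨rfl, rfl⟩) (hba | ⟨h1, h2⟩)
        · exact A2 _ _ hab hba
        · rw [h1, h2] at hab; exact hnew _ _ (Or.inr ⟨rfl, rfl⟩) hab
        · exact hnew _ _ (Or.inr ⟨rfl, rfl⟩) hba
        · exact (H.ne_of_adj h) h2
      · rintro a b (hab | ⟨rfl, rfl⟩)
        · exact ⟨Set.mem_insert_of_mem _ (A3 _ _ hab).1, Set.mem_insert_of_mem _ (A3 _ _ hab).2⟩
        · exact ⟨Set.mem_insert _ _, Set.mem_insert_of_mem _ hzS₁⟩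
      · intro a b hab; exact Or.inl (A4 _ _ hab)
      · exact A5.trans ((Set.subset_insert _ _))
      · rintro a b (hab | ⟨rfl, rfl⟩)
        · rcases A7 a b hab with h' | ⟨h1, h2, h3⟩
          · exact Or.inl h'
          · exact Or.inr ⟨by simp [SimpleGraph.Walk.support_cons, h1],
              by simp [SimpleGraph.Walk.support_cons, h2], h3⟩
        · exact Or.inr ⟨by simp [SimpleGraph.Walk.support_cons],
            by simp [SimpleGraph.Walk.support_cons, q.start_mem_support], h⟩
      · intro u hu
        rcases Set.mem_insert_iff.mp hu with rfl | hu
        · obtain ⟨s, hs, hpath⟩ := A8 _ hzS₁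
          exact ⟨s, hs, ReflTransGen.head (Or.inr ⟨rfl, rfl⟩) (ReflTransGen.mono (fun a b hab => Or.inl hab) _ _ hpath)⟩
        · obtain ⟨s, hs, hpath⟩ := A8 _ hu
          exact ⟨s, hs, ReflTransGen.mono (fun a b hab => Or.inl hab) _ _ hpath⟩
      · intro u hu
        rcases Set.mem_insert_iff.mp hu with rfl | hu
        · exact ReflTransGen.refl
        · exact ReflTransGen.head (Or.inr ⟨rfl, rfl⟩)
            (ReflTransGen.mono (fun a b hab => Or.inl hab) _ _ (A9 _ hu))
      · intro w hw
        simp only [SimpleGraph.Walk.support_cons, List.mem_cons] at hw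
        rcases hw with rfl | hw
        · exact Set.mem_insert _ _
        · exact Set.mem_insert_of_mem _ (A10 _ hw)

lemma grow {G : SimpleGraph V} (hb : ∀ e, (G.deleteEdges {e}).Connected)
    {r : V → V → Prop} {S : Set V} (hg : GoodOn G r S)
    {x y : V} (hx : x ∈ S) (hy : y ∉ S) (hadj : G.Adj x y) :
    ∃ (r' : V → V → Prop) (S' : Set V), GoodOn G r' S' ∧ S ⊆ S' ∧ y ∈ S' := by
  classical
  set H := G.deleteEdges {s(x, y)} with hH
  have hHG : H ≤ G := SimpleGraph.deleteEdges_le _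
  have hxy : ¬ H.Adj x y := by
    simp [hH, SimpleGraph.deleteEdges_adj]
  have hyx : ¬ H.Adj y x := by
    simp [hH, SimpleGraph.deleteEdges_adj, Sym2.eq_swap]
  obtain ⟨p0⟩ := (hb s(x, y)).preconnected y x
  obtain ⟨r₁, S₁, A1, A2, A3, A4, A5, A7, A8, A9, A10⟩ :=
    ear hHG hg p0.bypass p0.bypass_isPath hx
  have hyS₁ : y ∈ S₁ := A10 _ p0.bypass.start_mem_support
  have hnotr₁ : ¬ r₁ x y ∧ ¬ r₁ y x := by
    constructor
    · intro hc
      rcases A7 _ _ hc with h' | ⟨_, _, h3⟩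
      · exact hy (hg.2.2.1 _ _ h').2
      · exact hxy h3
    · intro hc
      rcases A7 _ _ hc with h' | ⟨_, _, h3⟩
      · exact hy (hg.2.2.1 _ _ h').1
      · exact hyx h3
  refine ⟨fun a b => r₁ a b ∨ (a = x ∧ b = y), S₁, ⟨?_, ?_, ?_, ?_⟩, A5, hyS₁⟩
  · rintro a b (hab | ⟨rfl, rfl⟩)
    · exact A1 _ _ hab
    · exact hadj
  · rintro a b (hab | ⟨rfl, rfl⟩) (hba | ⟨h1, h2⟩)
    · exact A2 _ _ hab hba
    · rw [h1, h2] at hab; exact hnotr₁.2 hab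
    · exact hnotr₁.2 hba
    · exact (G.ne_of_adj hadj) h2
  · rintro a b (hab | ⟨rfl, rfl⟩)
    · exact A3 _ _ hab
    · exact ⟨A5 hx, hyS₁⟩
  · intro u1 hu1 u2 hu2
    obtain ⟨s, hs, hp1⟩ := A8 _ hu1
    have hp2 : ReflTransGen r₁ s x := ReflTransGen.mono A4 _ _ (hg.2.2.2 _ hs _ hx)
    have hp3 : ReflTransGen r₁ y u2 := A9 _ hu2
    have lift : ∀ {a b}, ReflTransGen r₁ a b →
        ReflTransGen (fun a b => r₁ a b ∨ (a = x ∧ b = y)) a b :=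
      fun h => ReflTransGen.mono (fun a b hab => Or.inl hab) _ _ h
    exact ((lift hp1).trans (lift hp2)).trans
      (ReflTransGen.head (Or.inr ⟨rfl, rfl⟩) (lift hp3))

theorem robbins [Fintype V] [Nonempty V] {G : SimpleGraph V}
    (hc : G.Connected) (hb : ∀ e, (G.deleteEdges {e}).Connected) :
    ∃ r : V → V → Prop, (∀ a b, r a b → G.Adj a b) ∧ (∀ a b, r a b → ¬ r b a) ∧ IsStrong r := by
  classical
  have main : ∀ (n : ℕ) (r : V → V → Prop) (S : Set V), GoodOn G r S → S.Nonempty →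
      Fintype.card V ≤ n + S.ncard →
      ∃ r' : V → V → Prop, (∀ a b, r' a b → G.Adj a b) ∧ (∀ a b, r' a b → ¬ r' b a) ∧
        IsStrong r' := by
    intro n
    induction n with
    | zero =>
      intro r S hg hne hcard
      have hS : S = Set.univ := by
        refine Set.eq_of_subset_of_ncard_le (Set.subset_univ S) ?_ Set.finite_univ
        rwa [Set.ncard_univ, Nat.card_eq_fintype_card, ← Nat.zero_add S.ncard]
      exact ⟨r, hg.1, hg.2.1, fun a b => hg.2.2.2 _ (by simp [hS]) _ (by simp [hS])⟩
    | succ n ih =>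
      intro r S hg hne hcard
      by_cases huniv : S = Set.univ
      · exact ⟨r, hg.1, hg.2.1, fun a b => hg.2.2.2 _ (by simp [huniv]) _ (by simp [huniv])⟩
      · obtain ⟨y0, hy0⟩ := (Set.ne_univ_iff_exists_notMem S).mp huniv
        obtain ⟨s0, hs0⟩ := hne
        obtain ⟨pw⟩ := hc.preconnected s0 y0
        obtain ⟨dd, _, hdS, hdS'⟩ := pw.exists_boundary_dart S hs0 hy0
        obtain ⟨r', S', hg', hSS', hyS'⟩ := grow hb hg hdS hdS' dd.adj
        have hlt : S.ncard < S'.ncard := by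
          refine Set.ncard_lt_ncard ⟨hSS', fun hsub => hdS' (hsub hyS')⟩ (Set.toFinite _)
        exact ih r' S' hg' ⟨s0, hSS' hs0⟩ (by omega)
  obtain ⟨v0⟩ := ‹Nonempty V›
  refine main (Fintype.card V) (fun _ _ => False) {v0} ⟨?_, ?_, ?_, ?_⟩ ⟨v0, rfl⟩ ?_
  · intro a b h; exact h.elim
  · intro a b h; exact h.elim
  · intro a b h; exact h.elim
  · intro a ha b hb
    rw [Set.mem_singleton_iff.mp ha, Set.mem_singleton_iff.mp hb]
  · simp

/-- Any antisymmetric subrelation of the adjacency relation extends to a full orientation. -/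
lemma completeOrient [Fintype V] (G : SimpleGraph V) {r : V → V → Prop}
    (h1 : ∀ a b, r a b → G.Adj a b) (h2 : ∀ a b, r a b → ¬ r b a) :
    ∃ O : Orient G, ∀ a b, r a b → O.dir a b := by
  letI : LinearOrder V := LinearOrder.lift' (Fintype.equivFin V) (Equiv.injective _)
  refine ⟨⟨fun a b => r a b ∨ (G.Adj a b ∧ ¬ r a b ∧ ¬ r b a ∧ a < b), ?_, ?_⟩,
    fun a b h => Or.inl h⟩
  · intro a b
    constructor
    · rintro ((h | ⟨h, -⟩) | (h | ⟨h, -⟩))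
      · exact h1 _ _ h
      · exact h
      · exact (h1 _ _ h).symm
      · exact h.symm
    · intro hadj
      by_cases hab : r a b
      · exact Or.inl (Or.inl hab)
      by_cases hba : r b a
      · exact Or.inr (Or.inl hba)
      rcases lt_or_gt_of_ne (G.ne_of_adj hadj) with hlt | hlt
      · exact Or.inl (Or.inr ⟨hadj, hab, hba, hlt⟩)
      · exact Or.inr (Or.inr ⟨hadj.symm, hba, hab, hlt⟩)
  · rintro a b (hab | ⟨-, hab, hba, hlt⟩) (h | ⟨-, hba', hab', hlt'⟩)
    · exact h2 _ _ hab h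
    · exact hab' hab
    · exact hba h
    · exact lt_asymm hlt hlt'

/-- In a 3-edge-connected finite graph, for every pair of vertices there is a strongly
connected orientation that remains strong after deleting the (possible) edge between them. -/
lemma exists_orient_deletable [Fintype V] [Nonempty V] {G : SimpleGraph V}
    (h3 : ThreeEdgeConn G) (a b : V) :
    ∃ O : Orient G, IsStrong O.dir ∧ IsStrong (delEdge O.dir a b) := by
  classical
  set H := G.deleteEdges {s(a, b)} with hHdef
  have hc : H.Connected := by
    have := h3.2 s(a, b) s(a, b)
    rwa [Set.pair_eq_singleton] at this
  have hb : ∀ e, (H.deleteEdges {e}).Connected := by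
    intro e
    rw [hHdef, SimpleGraph.deleteEdges_deleteEdges]
    have := h3.2 s(a, b) e
    rwa [show ({s(a,b)} ∪ {e} : Set (Sym2 V)) = {s(a,b), e} by
      rw [Set.singleton_union]]
  obtain ⟨r, hr1, hr2, hr3⟩ := robbins hc hb
  have hr1' : ∀ x y, r x y → G.Adj x y := fun x y h => (SimpleGraph.deleteEdges_le _) (hr1 _ _ h)
  obtain ⟨O, hO⟩ := completeOrient G hr1' hr2
  have hsub : ∀ x y, r x y → delEdge O.dir a b x y := by
    intro x y h
    refine ⟨hO _ _ h, ?_⟩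
    rintro (⟨rfl, rfl⟩ | ⟨rfl, rfl⟩)
    · have := hr1 _ _ h
      rw [hHdef, SimpleGraph.deleteEdges_adj] at this
      exact this.2 rfl
    · have := hr1 _ _ h
      rw [hHdef, SimpleGraph.deleteEdges_adj] at this
      exact this.2 (Sym2.eq_swap)
  constructor
  · exact ⟨fun x y => ReflTransGen.mono (fun x y h => hO _ _ h) _ _ (hr3 x y),
      fun x y => ReflTransGen.mono hsub _ _ (hr3 x y)⟩

section Proj

variable {G : SimpleGraph V} {v : V} {d : ℕ} {m : ZMod d → V}

lemma adj_inl_inl {w w' : {w : V // w ≠ v}} :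
    (localCubicMod G v d m).Adj (Sum.inl w) (Sum.inl w') ↔ G.Adj w.1 w'.1 := by
  constructor
  · rintro ⟨-, h | h⟩
    · exact h
    · exact h.symm
  · intro h
    exact ⟨fun he => G.ne_of_adj h (congrArg Subtype.val (Sum.inl_injective he)), Or.inl h⟩

lemma adj_inl_inr {w : {w : V // w ≠ v}} {i : ZMod d} :
    (localCubicMod G v d m).Adj (Sum.inl w) (Sum.inr i) ↔ w.1 = m i := by
  constructor
  · rintro ⟨-, h | h⟩
    · exact h
    · exact h.elim
  · intro h
    exact ⟨by simp, Or.inl h⟩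

lemma adj_inr_inl {w : {w : V // w ≠ v}} {i : ZMod d} :
    (localCubicMod G v d m).Adj (Sum.inr i) (Sum.inl w) ↔ w.1 = m i := by
  rw [SimpleGraph.adj_comm]; exact adj_inl_inr

lemma dir_adj {O : Orient (localCubicMod G v d m)} {a b} (h : O.dir a b) :
    (localCubicMod G v d m).Adj a b :=
  (O.dir_iff a b).mp (Or.inl h)

/-- Projection of vertices of the modification back to `V`. -/
def projV (v : V) : ({w : V // w ≠ v} ⊕ ZMod d) → V :=
  Sum.elim (fun w => w.1) (fun _ => v)

/-- The projected orientation relation on `G`. -/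
def projDir (O : Orient (localCubicMod G v d m)) (u w : V) : Prop :=
  (∃ (hu : u ≠ v) (hw : w ≠ v), O.dir (Sum.inl ⟨u, hu⟩) (Sum.inl ⟨w, hw⟩)) ∨
  (∃ (hu : u ≠ v) (i : ZMod d), w = v ∧ O.dir (Sum.inl ⟨u, hu⟩) (Sum.inr i)) ∨
  (∃ (hw : w ≠ v) (i : ZMod d), u = v ∧ O.dir (Sum.inr i) (Sum.inl ⟨w, hw⟩))

variable (hm : Function.Injective m) (hr : Set.range m = G.neighborSet v)

lemma adj_of_eq_m (hi : m i = u) (hr : Set.range m = G.neighborSet v) : G.Adj v u := by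
  have : u ∈ Set.range m := ⟨i, hi⟩
  rw [hr] at this
  exact this

include hm hr in
/-- The projected orientation. -/
def projOrient (O : Orient (localCubicMod G v d m)) : Orient G where
  dir := projDir O
  dir_iff := by
    intro u w
    constructor
    · rintro ((⟨hu, hw, h⟩ | ⟨hu, i, rfl, h⟩ | ⟨hw, i, rfl, h⟩) |
        (⟨hu, hw, h⟩ | ⟨hu, i, rfl, h⟩ | ⟨hw, i, rfl, h⟩))
      · exact adj_inl_inl.mp (dir_adj h)
      · exact (adj_of_eq_m (adj_inl_inr.mp (dir_adj h)).symm hr).symm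
      · exact adj_of_eq_m (adj_inr_inl.mp (dir_adj h)).symm hr
      · exact (adj_inl_inl.mp (dir_adj h)).symm
      · exact adj_of_eq_m (adj_inl_inr.mp (dir_adj h)).symm hr
      · exact (adj_of_eq_m (adj_inr_inl.mp (dir_adj h)).symm hr).symm
    · intro h
      by_cases hu : u = v
      · have hvw : G.Adj v w := by rw [← hu]; exact h
        have hw : w ≠ v := fun hww => G.irrefl (hww ▸ hvw)
        have : w ∈ Set.range m := by rw [hr]; exact hvw
        obtain ⟨i, hi⟩ := this
        have hadj : (localCubicMod G v d m).Adj (Sum.inl ⟨w, hw⟩) (Sum.inr i) :=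
          adj_inl_inr.mpr hi.symm
        rcases ((O.dir_iff _ _).mpr hadj) with hd | hd
        · exact Or.inr (Or.inr (Or.inl ⟨hw, i, hu, hd⟩))
        · exact Or.inl (Or.inr (Or.inr ⟨hw, i, hu, hd⟩))
      · by_cases hw : w = v
        · have hvu : G.Adj v u := by rw [← hw]; exact h.symm
          have : u ∈ Set.range m := by rw [hr]; exact hvu
          obtain ⟨i, hi⟩ := this
          have hadj : (localCubicMod G v d m).Adj (Sum.inl ⟨u, hu⟩) (Sum.inr i) :=
            adj_inl_inr.mpr hi.symm
          rcases ((O.dir_iff _ _).mpr hadj) with hd | hd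
          · exact Or.inl (Or.inr (Or.inl ⟨hu, i, hw, hd⟩))
          · exact Or.inr (Or.inr (Or.inr ⟨hu, i, hw, hd⟩))
        · have hadj : (localCubicMod G v d m).Adj (Sum.inl ⟨u, hu⟩) (Sum.inl ⟨w, hw⟩) :=
            adj_inl_inl.mpr h
          rcases ((O.dir_iff _ _).mpr hadj) with hd | hd
          · exact Or.inl (Or.inl ⟨hu, hw, hd⟩)
          · exact Or.inr (Or.inl ⟨hw, hu, hd⟩)
  not_both := by
    rintro u w (⟨hu, hw, hd⟩ | ⟨hu, i, hwv, hd⟩ | ⟨hw, i, huv, hd⟩) <;>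
      rintro (⟨hu', hw', hd'⟩ | ⟨hw', j, huv', hd'⟩ | ⟨hu', j, hwv', hd'⟩)
    · exact O.not_both _ _ hd hd'
    · exact hu huv'
    · exact hw hwv'
    · exact hu' hwv
    · exact hw' hwv
    · -- (2,3)
      have h1 : u = m i := adj_inl_inr.mp (dir_adj hd)
      have h2 : u = m j := adj_inr_inl.mp (dir_adj hd')
      have : i = j := hm (h1.symm.trans h2)
      subst this
      exact O.not_both _ _ hd hd'
    · exact hw' huv
    · -- (3,2)
      have h1 : w = m i := adj_inr_inl.mp (dir_adj hd)
      have h2 : w = m j := adj_inl_inr.mp (dir_adj hd')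
      have : i = j := hm (h1.symm.trans h2)
      subst this
      exact O.not_both _ _ hd hd'
    · exact hw hwv'

end Proj

section Lift

variable {G : SimpleGraph V} {v : V} {d : ℕ} {m : ZMod d → V}

open Classical in
/-- Lift a vertex of `V` to the modification. -/
noncomputable def liftV (v : V) (d : ℕ) (x : V) : ({w : V // w ≠ v} ⊕ ZMod d) :=
  if hx : x = v then Sum.inr 0 else Sum.inl ⟨x, hx⟩

lemma projV_liftV (v : V) (d : ℕ) (x : V) : projV v (liftV v d x) = x := by
  unfold liftV
  by_cases hx : x = v
  · rw [dif_pos hx]; simp [projV, hx]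
  · rw [dif_neg hx]; simp [projV]

lemma lift_strong {R : ({w : V // w ≠ v} ⊕ ZMod d) → ({w : V // w ≠ v} ⊕ ZMod d) → Prop}
    {P : V → V → Prop}
    (hstep : ∀ a b, R a b → Relation.ReflTransGen P (projV v a) (projV v b))
    (hs : IsStrong R) : IsStrong P := by
  intro x y
  have key : ∀ {a b}, Relation.ReflTransGen R a b →
      Relation.ReflTransGen P (projV v a) (projV v b) := by
    intro a b h
    induction h with
    | refl => exact Relation.ReflTransGen.refl
    | tail _ h2 ih => exact ih.trans (hstep _ _ h2)
  have := key (hs (liftV v d x) (liftV v d y))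
  rwa [projV_liftV, projV_liftV] at this

lemma step_proj (O : Orient (localCubicMod G v d m)) {a b} (h : O.dir a b) :
    Relation.ReflTransGen (projDir O) (projV v a) (projV v b) := by
  match a, b with
  | Sum.inl w1, Sum.inl w2 =>
    exact Relation.ReflTransGen.single (Or.inl ⟨w1.2, w2.2, h⟩)
  | Sum.inl w1, Sum.inr i =>
    exact Relation.ReflTransGen.single (Or.inr (Or.inl ⟨w1.2, i, rfl, h⟩))
  | Sum.inr i, Sum.inl w2 =>
    exact Relation.ReflTransGen.single (Or.inr (Or.inr ⟨w2.2, i, rfl, h⟩))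
  | Sum.inr i, Sum.inr j => exact Relation.ReflTransGen.refl

lemma proj_strong (O : Orient (localCubicMod G v d m)) (hs : IsStrong O.dir) :
    IsStrong (projDir O) :=
  lift_strong (fun a b h => step_proj O h) hs

/-- Correspondence between an edge of `G` and an edge of the modification. -/
def Corr (v : V) (m : ZMod d → V) (u w : V) (a₀ b₀ : {w : V // w ≠ v} ⊕ ZMod d) : Prop :=
  (∃ (hu : u ≠ v) (hw : w ≠ v), a₀ = Sum.inl ⟨u, hu⟩ ∧ b₀ = Sum.inl ⟨w, hw⟩) ∨
  (∃ (hu : u ≠ v) (i : ZMod d), w = v ∧ m i = u ∧ a₀ = Sum.inl ⟨u, hu⟩ ∧ b₀ = Sum.inr i) ∨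
  (∃ (hw : w ≠ v) (i : ZMod d), u = v ∧ m i = w ∧ a₀ = Sum.inl ⟨w, hw⟩ ∧ b₀ = Sum.inr i)

lemma corr_exists (hr : Set.range m = G.neighborSet v) {u w : V} (h : G.Adj u w) :
    ∃ a₀ b₀, Corr v m u w a₀ b₀ ∧ (localCubicMod G v d m).Adj a₀ b₀ := by
  by_cases hu : u = v
  · have hvw : G.Adj v w := by rw [← hu]; exact h
    have hw : w ≠ v := fun hww => G.irrefl (hww ▸ hvw)
    obtain ⟨i, hi⟩ : w ∈ Set.range m := by rw [hr]; exact hvw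
    exact ⟨Sum.inl ⟨w, hw⟩, Sum.inr i, Or.inr (Or.inr ⟨hw, i, hu, hi, rfl, rfl⟩),
      adj_inl_inr.mpr hi.symm⟩
  · by_cases hw : w = v
    · have hvu : G.Adj v u := by rw [← hw]; exact h.symm
      obtain ⟨i, hi⟩ : u ∈ Set.range m := by rw [hr]; exact hvu
      exact ⟨Sum.inl ⟨u, hu⟩, Sum.inr i, Or.inr (Or.inl ⟨hu, i, hw, hi, rfl, rfl⟩),
        adj_inl_inr.mpr hi.symm⟩
    · exact ⟨Sum.inl ⟨u, hu⟩, Sum.inl ⟨w, hw⟩, Or.inl ⟨hu, hw, rfl, rfl⟩, adj_inl_inl.mpr h⟩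

lemma step_del (hm : Function.Injective m) (O : Orient (localCubicMod G v d m))
    {u w : V} {a₀ b₀ : {w : V // w ≠ v} ⊕ ZMod d} (hc : Corr v m u w a₀ b₀)
    {a b} (h : delEdge O.dir a₀ b₀ a b) :
    Relation.ReflTransGen (delEdge (projDir O) u w) (projV v a) (projV v b) := by
  obtain ⟨hd, hne⟩ := h
  match a, b with
  | Sum.inr i, Sum.inr j => exact Relation.ReflTransGen.refl
  | Sum.inl w1, Sum.inl w2 =>
    refine Relation.ReflTransGen.single ⟨Or.inl ⟨w1.2, w2.2, hd⟩, ?_⟩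
    rintro (⟨h1, h2⟩ | ⟨h1, h2⟩)
    · rcases hc with ⟨hu, hw, ha, hb⟩ | ⟨hu, i, hwv, hmi, ha, hb⟩ | ⟨hw, i, huv, hmi, ha, hb⟩
      · refine hne (Or.inl ⟨?_, ?_⟩)
        · rw [ha]; exact congrArg Sum.inl (Subtype.ext h1)
        · rw [hb]; exact congrArg Sum.inl (Subtype.ext h2)
      · exact w2.2 (h2.trans hwv)
      · exact w1.2 (h1.trans huv)
    · rcases hc with ⟨hu, hw, ha, hb⟩ | ⟨hu, i, hwv, hmi, ha, hb⟩ | ⟨hw, i, huv, hmi, ha, hb⟩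
      · refine hne (Or.inr ⟨?_, ?_⟩)
        · rw [hb]; exact congrArg Sum.inl (Subtype.ext h1)
        · rw [ha]; exact congrArg Sum.inl (Subtype.ext h2)
      · exact w1.2 (h1.trans hwv)
      · exact w2.2 (h2.trans huv)
  | Sum.inl w1, Sum.inr i =>
    have hadj : w1.1 = m i := adj_inl_inr.mp (dir_adj hd)
    refine Relation.ReflTransGen.single ⟨Or.inr (Or.inl ⟨w1.2, i, rfl, hd⟩), ?_⟩
    rintro (⟨h1, h2⟩ | ⟨h1, h2⟩)
    · rcases hc with ⟨hu, hw, ha, hb⟩ | ⟨hu, j, hwv, hmj, ha, hb⟩ | ⟨hw, j, huv, hmj, ha, hb⟩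
      · exact hw h2.symm
      · have hij : i = j := hm ((hadj.symm.trans h1).trans hmj.symm)
        refine hne (Or.inl ⟨?_, ?_⟩)
        · rw [ha]; exact congrArg Sum.inl (Subtype.ext h1)
        · rw [hb, hij]
      · exact hw h2.symm
    · rcases hc with ⟨hu, hw, ha, hb⟩ | ⟨hu, j, hwv, hmj, ha, hb⟩ | ⟨hw, j, huv, hmj, ha, hb⟩
      · exact hu h2.symm
      · exact hu h2.symm
      · have hij : i = j := hm ((hadj.symm.trans h1).trans hmj.symm)
        refine hne (Or.inl ⟨?_, ?_⟩)
        · rw [ha]; exact congrArg Sum.inl (Subtype.ext h1)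
        · rw [hb, hij]
  | Sum.inr i, Sum.inl w2 =>
    have hadj : w2.1 = m i := adj_inr_inl.mp (dir_adj hd)
    refine Relation.ReflTransGen.single ⟨Or.inr (Or.inr ⟨w2.2, i, rfl, hd⟩), ?_⟩
    rintro (⟨h1, h2⟩ | ⟨h1, h2⟩)
    · rcases hc with ⟨hu, hw, ha, hb⟩ | ⟨hu, j, hwv, hmj, ha, hb⟩ | ⟨hw, j, huv, hmj, ha, hb⟩
      · exact hu h1.symm
      · exact hu h1.symm
      · have hij : i = j := hm ((hadj.symm.trans h2).trans hmj.symm)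
        refine hne (Or.inr ⟨?_, ?_⟩)
        · rw [hb, hij]
        · rw [ha]; exact congrArg Sum.inl (Subtype.ext h2)
    · rcases hc with ⟨hu, hw, ha, hb⟩ | ⟨hu, j, hwv, hmj, ha, hb⟩ | ⟨hw, j, huv, hmj, ha, hb⟩
      · exact hw h1.symm
      · have hij : i = j := hm ((hadj.symm.trans h2).trans hmj.symm)
        refine hne (Or.inr ⟨?_, ?_⟩)
        · rw [hb, hij]
        · rw [ha]; exact congrArg Sum.inl (Subtype.ext h2)
      · exact hw h1.symm

lemma proj_del (hm : Function.Injective m) (O : Orient (localCubicMod G v d m))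
    {u w : V} {a₀ b₀ : {w : V // w ≠ v} ⊕ ZMod d} (hc : Corr v m u w a₀ b₀)
    (hdel : IsStrong (delEdge O.dir a₀ b₀)) : IsStrong (delEdge (projDir O) u w) :=
  lift_strong (fun a b h => step_del hm O hc h) hdel

end Lift

theorem stmt_11 [Fintype V] (G : SimpleGraph V) (h3 : ThreeEdgeConn G) (v : V) (d : ℕ)
    (hd3 : 3 ≤ d) (m : ZMod d → V) (hm : Function.Injective m)
    (hr : Set.range m = G.neighborSet v)
    (h3v : ThreeEdgeConn (localCubicMod G v d m)) :
    frankNumber G ≤ frankNumber (localCubicMod G v d m) := by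
  classical
  haveI : NeZero d := ⟨by omega⟩
  haveI : Nonempty ({w : V // w ≠ v} ⊕ ZMod d) := ⟨Sum.inr 0⟩
  set Gv := localCubicMod G v d m with hGvdef
  set n := Fintype.card ((({w : V // w ≠ v} ⊕ ZMod d)) × (({w : V // w ≠ v} ⊕ ZMod d))) with hn
  set e := Fintype.equivFin ((({w : V // w ≠ v} ⊕ ZMod d)) × (({w : V // w ≠ v} ⊕ ZMod d)))
    with he
  have hOs : ∀ j : Fin n, ∃ O : Orient Gv, IsStrong O.dir ∧
      IsStrong (delEdge O.dir (e.symm j).1 (e.symm j).2) :=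
    fun j => exists_orient_deletable h3v _ _
  choose Os hOs1 hOs2 using hOs
  have hmem : n ∈ {k | ∃ Os : Fin k → Orient Gv, (∀ i, IsStrong (Os i).dir) ∧
      ∀ u w, Gv.Adj u w → ∃ i, EdgeDeletable (Os i) u w} := by
    refine ⟨Os, hOs1, ?_⟩
    intro a b hab
    refine ⟨e (a, b), ?_⟩
    have h := hOs2 (e (a, b))
    rwa [Equiv.symm_apply_apply] at h
  have h1 : frankNumber Gv ∈ {k | ∃ Os : Fin k → Orient Gv, (∀ i, IsStrong (Os i).dir) ∧
      ∀ u w, Gv.Adj u w → ∃ i, EdgeDeletable (Os i) u w} := Nat.sInf_mem ⟨n, hmem⟩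
  obtain ⟨Os', hstr', hcov'⟩ := h1
  have h2 : frankNumber Gv ∈ {k | ∃ Os : Fin k → Orient G, (∀ i, IsStrong (Os i).dir) ∧
      ∀ u w, G.Adj u w → ∃ i, EdgeDeletable (Os i) u w} := by
    refine ⟨fun i => projOrient hm hr (Os' i), fun i => proj_strong _ (hstr' i), ?_⟩
    intro u w huw
    obtain ⟨a₀, b₀, hcorr, hadj⟩ := corr_exists hr huw
    obtain ⟨i, hdel⟩ := hcov' a₀ b₀ hadj
    exact ⟨i, proj_del hm (Os' i) hcorr hdel⟩
  exact Nat.sInf_le h2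

end Frank
end

section
/- Let G be a 3-edge-connected graph and let v be a vertex of degree 3. If G_v is a 3-edge-connected local cubic modification (truncation) of G at v, then F(G_v) ≤ F(G). -/
namespace Frank

variable {V : Type*}

/-! ### Helpers -/

lemma rtg_mono_lift {α β : Type*} {r : α → α → Prop} {s : β → β → Prop} (f : α → β)
    (h : ∀ a b, r a b → Relation.ReflTransGen s (f a) (f b)) :
    ∀ {a b}, Relation.ReflTransGen r a b → Relation.ReflTransGen s (f a) (f b) := by
  intro a b hab
  induction hab with
  | refl => exact .refl
  | tail _ hbc ih => exact ih.trans (h _ _ hbc)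

lemma rtg_pair {α : Type*} {R : α → α → Prop} {a b c : α} (h1 : R a b) (h2 : R b c) :
    Relation.ReflTransGen R a c :=
  (Relation.ReflTransGen.single h1).tail h2

lemma delEdge_comm (r : V → V → Prop) (u w : V) : delEdge r u w = delEdge r w u := by
  funext a b; unfold delEdge; apply propext; tauto

lemma edgeDeletable_comm {G : SimpleGraph V} {O : Orient G} {u w : V}
    (h : EdgeDeletable O u w) : EdgeDeletable O w u := by
  unfold EdgeDeletable at *; rwa [delEdge_comm]

lemma exists_last_arc {r : V → V → Prop} {x y : V} (h : Relation.ReflTransGen r x y)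
    (hxy : x ≠ y) : ∃ a, r a y := by
  cases h with
  | refl => exact absurd rfl hxy
  | tail _ hby => exact ⟨_, hby⟩

lemma exists_first_arc {r : V → V → Prop} {x y : V} (h : Relation.ReflTransGen r x y)
    (hxy : x ≠ y) : ∃ a, r x a := by
  rcases Relation.ReflTransGen.cases_head h with h | ⟨c, hc, _⟩
  · exact absurd h hxy
  · exact ⟨_, hc⟩

section Sec
variable {G : SimpleGraph V} {v : V} {m : ZMod 3 → V}

local notation "W" => ({w : V // w ≠ v} ⊕ ZMod 3)
local notation "GV" => localCubicMod G v 3 m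

lemma adj_m (hr : Set.range m = G.neighborSet v) (i : ZMod 3) : G.Adj (m i) v := by
  have : m i ∈ Set.range m := ⟨i, rfl⟩
  rw [hr] at this
  exact (G.adj_comm _ _).mp this

lemma m_ne_v (hr : Set.range m = G.neighborSet v) (i : ZMod 3) : m i ≠ v :=
  (G.ne_of_adj (adj_m hr i))

lemma adj_v_eq_m (hr : Set.range m = G.neighborSet v) {a : V} (h : G.Adj a v) :
    ∃ i, a = m i := by
  have : a ∈ Set.range m := by rw [hr]; exact h.symm
  exact ⟨this.choose, this.choose_spec.symm⟩

lemma lcm_adj_inl_inl {w w' : {w : V // w ≠ v}} :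
    (GV).Adj (Sum.inl w) (Sum.inl w') ↔ G.Adj w.1 w'.1 := by
  simp only [localCubicMod, SimpleGraph.fromRel_adj, lcmRel]
  constructor
  · rintro ⟨-, h | h⟩; exact h; exact h.symm
  · intro h
    refine ⟨?_, Or.inl h⟩
    intro he
    cases he
    exact absurd h (G.irrefl)
lemma lcm_adj_inl_inr {w : {w : V // w ≠ v}} {i : ZMod 3} :
    (GV).Adj (Sum.inl w) (Sum.inr i) ↔ w.1 = m i := by
  simp only [localCubicMod, SimpleGraph.fromRel_adj, lcmRel]
  constructor
  · rintro ⟨-, h | h⟩; exact h; exact h.elim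
  · intro h; exact ⟨by simp, Or.inl h⟩
lemma lcm_adj_inr_inl {w : {w : V // w ≠ v}} {i : ZMod 3} :
    (GV).Adj (Sum.inr i) (Sum.inl w) ↔ w.1 = m i := by
  rw [SimpleGraph.adj_comm]; exact lcm_adj_inl_inr
lemma lcm_adj_inr_inr {i j : ZMod 3} :
    (GV).Adj (Sum.inr i) (Sum.inr j) ↔ i ≠ j := by
  simp only [localCubicMod, SimpleGraph.fromRel_adj, lcmRel]
  constructor
  · rintro ⟨hne, -⟩ he; exact hne (by rw [he])
  · intro h
    refine ⟨by simpa using h, ?_⟩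
    revert h; revert i j; decide


/-- Master lemma: strong connectivity of a digraph on the truncated vertex set,
via simulation of walks in a strong digraph `r` on `V`. -/
lemma master (hr : Set.range m = G.neighborSet v)
    (r : V → V → Prop) (R : W → W → Prop) (EIn EOut : ZMod 3 → Prop)
    (hstrong : IsStrong r)
    (h_old : ∀ (a b : V) (ha : a ≠ v) (hb : b ≠ v), r a b →
      R (Sum.inl ⟨a, ha⟩) (Sum.inl ⟨b, hb⟩))
    (h_into : ∀ a, a ≠ v → r a v → ∃ j, EIn j ∧ a = m j)
    (h_enter : ∀ j, EIn j → R (Sum.inl ⟨m j, m_ne_v hr j⟩) (Sum.inr j))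
    (h_outof : ∀ b, b ≠ v → r v b → ∃ j, EOut j ∧ b = m j)
    (h_exitarc : ∀ j, EOut j → R (Sum.inr j) (Sum.inl ⟨m j, m_ne_v hr j⟩))
    (h_io : ∀ j j', EIn j → EOut j' → Relation.ReflTransGen R (Sum.inr j) (Sum.inr j'))
    (h_reach_out : ∀ j, ∃ j', EOut j' ∧ Relation.ReflTransGen R (Sum.inr j) (Sum.inr j'))
    (h_reach_in : ∀ j, ∃ j₀, EIn j₀ ∧ Relation.ReflTransGen R (Sum.inr j₀) (Sum.inr j)) :
    IsStrong R := by
  have A : ∀ (a : V) (ha : a ≠ v) (b : V), Relation.ReflTransGen r a b →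
      (∀ hb : b ≠ v, Relation.ReflTransGen R (Sum.inl ⟨a, ha⟩) (Sum.inl ⟨b, hb⟩)) ∧
      (b = v → ∀ j', EOut j' → Relation.ReflTransGen R (Sum.inl ⟨a, ha⟩) (Sum.inr j')) := by
    intro a ha b hab
    induction hab with
    | refl =>
      exact ⟨fun hb => .refl, fun hb => absurd hb ha⟩
    | @tail b c h1 h2 ih =>
      by_cases hc : c = v
      · refine ⟨fun hb => absurd hc hb, fun _ j' hj' => ?_⟩
        rw [hc] at h2
        by_cases hb : b = v
        · exact ih.2 hb j' hj'
        · obtain ⟨j, hjIn, hbm⟩ := h_into b hb h2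
          subst hbm
          exact ((ih.1 hb).tail (h_enter j hjIn)).trans (h_io j j' hjIn hj')
      · refine ⟨fun hc' => ?_, fun h => absurd h hc⟩
        by_cases hb : b = v
        · rw [hb] at h2
          obtain ⟨j', hj'Out, hcm⟩ := h_outof c hc h2
          subst hcm
          exact (ih.2 hb j' hj'Out).tail (h_exitarc j' hj'Out)
        · exact (ih.1 hb).tail (h_old b c hb hc h2)
  have hAin : ∀ (x : W), ∃ (p : {w : V // w ≠ v}), Relation.ReflTransGen R x (Sum.inl p) := by
    rintro (p | j)
    · exact ⟨p, .refl⟩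
    · obtain ⟨j', hOut, hre⟩ := h_reach_out j
      exact ⟨⟨m j', m_ne_v hr j'⟩, hre.tail (h_exitarc j' hOut)⟩
  have hfrom : ∀ (p : {w : V // w ≠ v}) (x : W), Relation.ReflTransGen R (Sum.inl p) x := by
    rintro p (p' | j)
    · exact (A p.1 p.2 p'.1 (hstrong _ _)).1 p'.2
    · obtain ⟨j₀, hIn, hre⟩ := h_reach_in j
      exact (((A p.1 p.2 (m j₀) (hstrong _ _)).1 (m_ne_v hr j₀)).tail (h_enter j₀ hIn)).trans hre
  intro x y
  obtain ⟨p, hxp⟩ := hAin x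
  exact hxp.trans (hfrom p y)


/-! ### The lifted orientation -/

/-- Orientation of the triangle: if `cyc`, the directed cycle `k → s → q → k`
(where `q = -(s+k)` is the third vertex); otherwise the non-cyclic orientation
with source `s` and sink `k`. -/
def triArc (s k : ZMod 3) (cyc : Bool) (i j : ZMod 3) : Prop :=
  if cyc then ((i = k ∧ j = s) ∨ (i = s ∧ j = -(s+k)) ∨ (i = -(s+k) ∧ j = k))
  else (i ≠ j ∧ (i = s ∨ j = k))

instance (s k : ZMod 3) (cyc : Bool) (i j : ZMod 3) : Decidable (triArc s k cyc i j) := by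
  unfold triArc; infer_instance

lemma triArc_total : ∀ (s k : ZMod 3), s ≠ k → ∀ (cyc : Bool) (i j : ZMod 3), i ≠ j →
    (triArc s k cyc i j ∨ triArc s k cyc j i) := by decide

lemma triArc_asymm : ∀ (s k : ZMod 3), s ≠ k → ∀ (cyc : Bool) (i j : ZMod 3),
    triArc s k cyc i j → ¬ triArc s k cyc j i := by decide

lemma tri_cases : ∀ (s k : ZMod 3), s ≠ k → ∀ i, i = s ∨ i = k ∨ i = -(s+k) := by decide

lemma q_ne_s : ∀ (s k : ZMod 3), s ≠ k → -(s+k) ≠ s := by decide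
lemma q_ne_k : ∀ (s k : ZMod 3), s ≠ k → -(s+k) ≠ k := by decide

def liftO (hr : Set.range m = G.neighborSet v) (O : Orient G)
    (s k : ZMod 3) (hsk : s ≠ k) (cyc : Bool) : Orient GV where
  dir x y := match x, y with
    | Sum.inl w, Sum.inl w' => O.dir w.1 w'.1
    | Sum.inl w, Sum.inr i => w.1 = m i ∧ O.dir w.1 v
    | Sum.inr i, Sum.inl w => w.1 = m i ∧ O.dir v w.1
    | Sum.inr i, Sum.inr j => triArc s k cyc i j
  dir_iff := by
    rintro (w | i) (w' | j)
    · rw [lcm_adj_inl_inl]; exact O.dir_iff w.1 w'.1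
    · rw [lcm_adj_inl_inr]
      constructor
      · rintro (⟨h, -⟩ | ⟨h, -⟩) <;> exact h
      · intro h
        rcases (O.dir_iff w.1 v).mpr (h ▸ adj_m hr j) with hd | hd
        · exact Or.inl ⟨h, hd⟩
        · exact Or.inr ⟨h, hd⟩
    · rw [lcm_adj_inr_inl]
      constructor
      · rintro (⟨h, -⟩ | ⟨h, -⟩) <;> exact h
      · intro h
        rcases (O.dir_iff w'.1 v).mpr (h ▸ adj_m hr i) with hd | hd
        · exact Or.inr ⟨h, hd⟩
        · exact Or.inl ⟨h, hd⟩
    · rw [lcm_adj_inr_inr]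
      constructor
      · intro hd
        rintro rfl
        rcases hd with hd | hd <;>
          exact triArc_asymm s k hsk cyc i i hd hd
      · intro hij
        exact triArc_total s k hsk cyc i j (by simpa using hij)
  not_both := by
    rintro (w | i) (w' | j)
    · exact O.not_both w.1 w'.1
    · rintro ⟨h1, h2⟩ ⟨h3, h4⟩; exact O.not_both _ _ h2 h4
    · rintro ⟨h1, h2⟩ ⟨h3, h4⟩; exact O.not_both _ _ h2 h4
    · exact triArc_asymm s k hsk cyc i j

-- in-set is contained in {s, q}, out-set in {q, k}
lemma in_cases (O : Orient G) (s k : ZMod 3) (hsk : s ≠ k)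
    (hk : O.dir v (m k)) {j : ZMod 3} (hj : O.dir (m j) v) : j = s ∨ j = -(s+k) := by
  rcases tri_cases s k hsk j with h | h | h
  · exact Or.inl h
  · exfalso; exact O.not_both _ _ hj (h ▸ hk)
  · exact Or.inr h

lemma out_cases (O : Orient G) (s k : ZMod 3) (hsk : s ≠ k)
    (hs : O.dir (m s) v) {j : ZMod 3} (hj : O.dir v (m j)) : j = -(s+k) ∨ j = k := by
  rcases tri_cases s k hsk j with h | h | h
  · exfalso; exact O.not_both _ _ hj (h ▸ hs)
  · exact Or.inr h
  · exact Or.inl h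


section LiftProofs
variable (hr : Set.range m = G.neighborSet v) (O : Orient G)
  (s k : ZMod 3) (hsk : s ≠ k) (cyc : Bool)

/-- Basic triangle arcs present in every lift (both cyclic and non-cyclic). -/
lemma arc_sq : (liftO hr O s k hsk cyc).dir (Sum.inr s) (Sum.inr (-(s+k))) := by
  show triArc s k cyc s (-(s+k))
  cases cyc
  · exact ⟨fun h => (q_ne_s s k hsk) h.symm, Or.inl rfl⟩
  · exact Or.inr (Or.inl ⟨rfl, rfl⟩)

lemma arc_qk : (liftO hr O s k hsk cyc).dir (Sum.inr (-(s+k))) (Sum.inr k) := by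
  show triArc s k cyc (-(s+k)) k
  cases cyc
  · exact ⟨q_ne_k s k hsk, Or.inr rfl⟩
  · exact Or.inr (Or.inr ⟨rfl, rfl⟩)

lemma lift_strong_s12 (hs : O.dir (m s) v) (hk : O.dir v (m k)) (hO : IsStrong O.dir) :
    IsStrong (liftO hr O s k hsk cyc).dir := by
  set L := (liftO hr O s k hsk cyc).dir with hL
  have a1 : L (Sum.inr s) (Sum.inr (-(s+k))) := arc_sq hr O s k hsk cyc
  have a2 : L (Sum.inr (-(s+k))) (Sum.inr k) := arc_qk hr O s k hsk cyc
  have reach_s : ∀ t, Relation.ReflTransGen L (Sum.inr s) (Sum.inr t) := by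
    intro t
    rcases tri_cases s k hsk t with rfl | rfl | rfl
    · exact .refl
    · exact rtg_pair a1 a2
    · exact .single a1
  have reach_to_k : ∀ t, Relation.ReflTransGen L (Sum.inr t) (Sum.inr k) := by
    intro t
    rcases tri_cases s k hsk t with rfl | rfl | rfl
    · exact rtg_pair a1 a2
    · exact .refl
    · exact .single a2
  refine master hr O.dir L (fun j => O.dir (m j) v) (fun j => O.dir v (m j)) hO
    (fun a b ha hb h => h)
    (fun a ha h => ?_) (fun j hj => ⟨rfl, hj⟩)
    (fun b hb h => ?_) (fun j hj => ⟨rfl, hj⟩)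
    (fun j j' hj hj' => ?_)
    (fun j => ⟨k, hk, reach_to_k j⟩)
    (fun j => ⟨s, hs, reach_s j⟩)
  · obtain ⟨i, rfl⟩ := adj_v_eq_m hr ((O.dir_iff a v).mp (Or.inl h))
    exact ⟨i, h, rfl⟩
  · obtain ⟨i, rfl⟩ := adj_v_eq_m hr (((O.dir_iff v b).mp (Or.inl h)).symm)
    exact ⟨i, h, rfl⟩
  · rcases in_cases O s k hsk hk hj with rfl | rfl
    · exact reach_s j'
    · rcases out_cases O s k hsk hs hj' with rfl | rfl
      · exact .refl
      · exact .single a2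

lemma lift_del_old (hs : O.dir (m s) v) (hk : O.dir v (m k))
    (p p' : {w : V // w ≠ v}) (hdel : EdgeDeletable O p.1 p'.1) :
    EdgeDeletable (liftO hr O s k hsk cyc) (Sum.inl p) (Sum.inl p') := by
  set L := (liftO hr O s k hsk cyc).dir with hL
  set R := delEdge L (Sum.inl p) (Sum.inl p') with hR
  have tno : ∀ (i j : ZMod 3), L (Sum.inr i) (Sum.inr j) → R (Sum.inr i) (Sum.inr j) := by
    intro i j h
    exact ⟨h, by rintro (⟨h1, -⟩ | ⟨h1, -⟩) <;> exact nomatch h1⟩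
  have a1 : R (Sum.inr s) (Sum.inr (-(s+k))) := tno _ _ (arc_sq hr O s k hsk cyc)
  have a2 : R (Sum.inr (-(s+k))) (Sum.inr k) := tno _ _ (arc_qk hr O s k hsk cyc)
  have reach_s : ∀ t, Relation.ReflTransGen R (Sum.inr s) (Sum.inr t) := by
    intro t
    rcases tri_cases s k hsk t with rfl | rfl | rfl
    · exact .refl
    · exact rtg_pair a1 a2
    · exact .single a1
  have reach_to_k : ∀ t, Relation.ReflTransGen R (Sum.inr t) (Sum.inr k) := by
    intro t
    rcases tri_cases s k hsk t with rfl | rfl | rfl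
    · exact rtg_pair a1 a2
    · exact .refl
    · exact .single a2
  refine master hr (delEdge O.dir p.1 p'.1) R (fun j => O.dir (m j) v) (fun j => O.dir v (m j))
    hdel
    (fun a b ha hb h => ⟨h.1, ?_⟩)
    (fun a ha h => ?_)
    (fun j hj => ⟨⟨rfl, hj⟩, by rintro (⟨-, h2⟩ | ⟨-, h2⟩) <;> exact nomatch h2⟩)
    (fun b hb h => ?_)
    (fun j hj => ⟨⟨rfl, hj⟩, by rintro (⟨h2, -⟩ | ⟨h2, -⟩) <;> exact nomatch h2⟩)
    (fun j j' hj hj' => ?_)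
    (fun j => ⟨k, hk, reach_to_k j⟩)
    (fun j => ⟨s, hs, reach_s j⟩)
  · rintro (⟨h1, h2⟩ | ⟨h1, h2⟩)
    · exact h.2 (Or.inl ⟨congrArg Subtype.val (Sum.inl.inj h1),
        congrArg Subtype.val (Sum.inl.inj h2)⟩)
    · exact h.2 (Or.inr ⟨congrArg Subtype.val (Sum.inl.inj h1),
        congrArg Subtype.val (Sum.inl.inj h2)⟩)
  · obtain ⟨i, rfl⟩ := adj_v_eq_m hr ((O.dir_iff a v).mp (Or.inl h.1))
    exact ⟨i, h.1, rfl⟩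
  · obtain ⟨i, rfl⟩ := adj_v_eq_m hr (((O.dir_iff v b).mp (Or.inl h.1)).symm)
    exact ⟨i, h.1, rfl⟩
  · rcases in_cases O s k hsk hk hj with rfl | rfl
    · exact reach_s j'
    · rcases out_cases O s k hsk hs hj' with rfl | rfl
      · exact .refl
      · exact .single a2

lemma lift_del_pendant (hs : O.dir (m s) v) (hk : O.dir v (m k))
    (i : ZMod 3) (hdel : EdgeDeletable O (m i) v)
    (hcase : cyc = true ∨ i = -(s+k)) :
    EdgeDeletable (liftO hr O s k hsk cyc)
      (Sum.inl ⟨m i, m_ne_v hr i⟩) (Sum.inr i) := by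
  set L := (liftO hr O s k hsk cyc).dir with hL
  set R := delEdge L (Sum.inl ⟨m i, m_ne_v hr i⟩) (Sum.inr i) with hR
  have hvv : ¬ O.dir v v := fun h => G.irrefl ((O.dir_iff v v).mp (Or.inl h))
  have tno : ∀ (a b : ZMod 3), L (Sum.inr a) (Sum.inr b) → R (Sum.inr a) (Sum.inr b) := by
    intro a b h
    refine ⟨h, ?_⟩
    rintro (⟨h1, -⟩ | ⟨-, h2⟩)
    · exact nomatch h1
    · exact nomatch h2
  have a1 : R (Sum.inr s) (Sum.inr (-(s+k))) := tno _ _ (arc_sq hr O s k hsk cyc)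
  have a2 : R (Sum.inr (-(s+k))) (Sum.inr k) := tno _ _ (arc_qk hr O s k hsk cyc)
  -- entry and exit indices for the deleted-pendant digraph
  refine master hr (delEdge O.dir (m i) v) R
    (fun j => O.dir (m j) v ∧ j ≠ i) (fun j => O.dir v (m j) ∧ j ≠ i) hdel
    (fun a b ha hb h => ⟨h.1, by rintro (⟨-, h2⟩ | ⟨h2, -⟩) <;> exact nomatch h2⟩)
    (fun a ha h => ?_)
    (fun j hj => ⟨⟨rfl, hj.1⟩, ?_⟩)
    (fun b hb h => ?_)
    (fun j hj => ⟨⟨rfl, hj.1⟩, ?_⟩)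
    (fun j j' hj hj' => ?_) (fun j => ?_) (fun j => ?_)
  · obtain ⟨i', rfl⟩ := adj_v_eq_m hr ((O.dir_iff a v).mp (Or.inl h.1))
    refine ⟨i', ⟨h.1, fun he => h.2 (Or.inl ⟨by rw [he], rfl⟩)⟩, rfl⟩
  · rintro (⟨-, h2⟩ | ⟨h2, -⟩)
    · exact hj.2 (Sum.inr.inj h2)
    · exact nomatch h2
  · obtain ⟨i', rfl⟩ := adj_v_eq_m hr (((O.dir_iff v b).mp (Or.inl h.1)).symm)
    refine ⟨i', ⟨h.1, fun he => h.2 (Or.inr ⟨rfl, by rw [he]⟩)⟩, rfl⟩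
  · rintro (⟨h2, -⟩ | ⟨h2, -⟩)
    · exact nomatch h2
    · exact hj.2 (Sum.inr.inj h2)
  · -- h_io
    rcases hcase with rfl | rfl
    · -- cyclic: full triangle
      have a3 : R (Sum.inr k) (Sum.inr s) := tno _ _ (Or.inl ⟨rfl, rfl⟩)
      have reach_any : ∀ a b : ZMod 3,
          Relation.ReflTransGen R (Sum.inr a) (Sum.inr b) := by
        intro a b
        have hca := tri_cases s k hsk a
        have hcb := tri_cases s k hsk b
        rcases hca with rfl | rfl | rfl <;> rcases hcb with rfl | rfl | rfl
        · exact .refl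
        · exact rtg_pair a1 a2
        · exact .single a1
        · exact .single a3
        · exact .refl
        · exact rtg_pair a3 a1
        · exact rtg_pair a2 a3
        · exact .single a2
        · exact .refl
      exact reach_any j j'
    · -- i = q
      have hoc := out_cases O s k hsk hs hj'.1
      rcases in_cases O s k hsk hk hj.1 with rfl | hq
      · rcases hoc with rfl | rfl
        · exact absurd rfl hj'.2
        · exact rtg_pair a1 a2
      · exact absurd hq hj.2
  · -- h_reach_out : need some element of EOut reachable from anywhere
    have : ∃ b, delEdge O.dir (m i) v v b := by
      have h1 : Relation.ReflTransGen (delEdge O.dir (m i) v) v (m k) := hdel v (m k)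
      obtain ⟨b, hb⟩ := exists_first_arc h1 (Ne.symm (m_ne_v hr k))
      exact ⟨b, hb⟩
    obtain ⟨b, hb⟩ := this
    have hbv : b ≠ v := fun he => hvv (he ▸ hb.1)
    obtain ⟨j', rfl⟩ := adj_v_eq_m hr (((O.dir_iff v b).mp (Or.inl hb.1)).symm)
    have hj'i : j' ≠ i := fun he => hb.2 (Or.inr ⟨rfl, by rw [he]⟩)
    refine ⟨j', ⟨hb.1, hj'i⟩, ?_⟩
    rcases hcase with rfl | rfl
    · have a3 : R (Sum.inr k) (Sum.inr s) := tno _ _ (Or.inl ⟨rfl, rfl⟩)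
      have hca := tri_cases s k hsk j
      have hcb := tri_cases s k hsk j'
      rcases hca with rfl | rfl | rfl <;> rcases hcb with rfl | rfl | rfl
      · exact .refl
      · exact rtg_pair a1 a2
      · exact .single a1
      · exact .single a3
      · exact .refl
      · exact rtg_pair a3 a1
      · exact rtg_pair a2 a3
      · exact .single a2
      · exact .refl
    · have htc := tri_cases s k hsk j
      rcases out_cases O s k hsk hs hb.1 with rfl | rfl
      · exact absurd rfl hj'i
      · rcases htc with rfl | rfl | rfl
        · exact rtg_pair a1 a2
        · exact .refl
        · exact .single a2
  · -- h_reach_in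
    have : ∃ a, delEdge O.dir (m i) v a v := by
      have h1 : Relation.ReflTransGen (delEdge O.dir (m i) v) (m k) v := hdel (m k) v
      exact exists_last_arc h1 (m_ne_v hr k)
    obtain ⟨a, ha⟩ := this
    have hav : a ≠ v := fun he => hvv (he ▸ ha.1)
    obtain ⟨j₀, rfl⟩ := adj_v_eq_m hr ((O.dir_iff a v).mp (Or.inl ha.1))
    have hj₀i : j₀ ≠ i := fun he => ha.2 (Or.inl ⟨by rw [he], rfl⟩)
    refine ⟨j₀, ⟨ha.1, hj₀i⟩, ?_⟩
    rcases hcase with rfl | rfl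
    · have a3 : R (Sum.inr k) (Sum.inr s) := tno _ _ (Or.inl ⟨rfl, rfl⟩)
      have hca := tri_cases s k hsk j₀
      have hcb := tri_cases s k hsk j
      rcases hca with rfl | rfl | rfl <;> rcases hcb with rfl | rfl | rfl
      · exact .refl
      · exact rtg_pair a1 a2
      · exact .single a1
      · exact .single a3
      · exact .refl
      · exact rtg_pair a3 a1
      · exact rtg_pair a2 a3
      · exact .single a2
      · exact .refl
    · have htc := tri_cases s k hsk j
      rcases in_cases O s k hsk hk ha.1 with rfl | rfl
      · rcases htc with rfl | rfl | rfl
        · exact .refl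
        · exact rtg_pair a1 a2
        · exact .single a1
      · exact absurd rfl hj₀i

end LiftProofs

section TriDel
variable (hr : Set.range m = G.neighborSet v) (O : Orient G)
  (s k : ZMod 3) (hsk : s ≠ k) (cyc : Bool)

/-- Boilerplate: arcs not touching the triangle survive deleting a triangle edge. -/
lemma master_tri_del (x y : ZMod 3)
    (hs : O.dir (m s) v) (hk : O.dir v (m k)) (hO : IsStrong O.dir)
    (hio : ∀ j j', O.dir (m j) v → O.dir v (m j') →
      Relation.ReflTransGen (delEdge (liftO hr O s k hsk cyc).dir (Sum.inr x) (Sum.inr y))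
        (Sum.inr j) (Sum.inr j'))
    (hrin : ∀ j, ∃ j₀, O.dir (m j₀) v ∧
      Relation.ReflTransGen (delEdge (liftO hr O s k hsk cyc).dir (Sum.inr x) (Sum.inr y))
        (Sum.inr j₀) (Sum.inr j))
    (hrout : ∀ j, ∃ j', O.dir v (m j') ∧
      Relation.ReflTransGen (delEdge (liftO hr O s k hsk cyc).dir (Sum.inr x) (Sum.inr y))
        (Sum.inr j) (Sum.inr j')) :
    EdgeDeletable (liftO hr O s k hsk cyc) (Sum.inr x) (Sum.inr y) := by
  refine master hr O.dir _ (fun j => O.dir (m j) v) (fun j => O.dir v (m j)) hO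
    (fun a b ha hb h => ⟨h, by rintro (⟨h2, -⟩ | ⟨h2, -⟩) <;> exact nomatch h2⟩)
    (fun a ha h => ?_)
    (fun j hj => ⟨⟨rfl, hj⟩, by rintro (⟨h2, -⟩ | ⟨h2, -⟩) <;> exact nomatch h2⟩)
    (fun b hb h => ?_)
    (fun j hj => ⟨⟨rfl, hj⟩, by rintro (⟨-, h2⟩ | ⟨-, h2⟩) <;> exact nomatch h2⟩)
    hio hrout hrin
  · obtain ⟨i, rfl⟩ := adj_v_eq_m hr ((O.dir_iff a v).mp (Or.inl h))
    exact ⟨i, h, rfl⟩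
  · obtain ⟨i, rfl⟩ := adj_v_eq_m hr (((O.dir_iff v b).mp (Or.inl h)).symm)
    exact ⟨i, h, rfl⟩

lemma lift_del_sk (hs : O.dir (m s) v) (hk : O.dir v (m k)) (hO : IsStrong O.dir) :
    EdgeDeletable (liftO hr O s k hsk cyc) (Sum.inr s) (Sum.inr k) := by
  set R := delEdge (liftO hr O s k hsk cyc).dir (Sum.inr s) (Sum.inr k) with hR
  have a1 : R (Sum.inr s) (Sum.inr (-(s+k))) := by
    refine ⟨arc_sq hr O s k hsk cyc, ?_⟩
    rintro (⟨-, h⟩ | ⟨h, -⟩)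
    · exact q_ne_k s k hsk (Sum.inr.inj h)
    · exact hsk (Sum.inr.inj h)
  have a2 : R (Sum.inr (-(s+k))) (Sum.inr k) := by
    refine ⟨arc_qk hr O s k hsk cyc, ?_⟩
    rintro (⟨h, -⟩ | ⟨h, -⟩)
    · exact q_ne_s s k hsk (Sum.inr.inj h)
    · exact q_ne_k s k hsk (Sum.inr.inj h)
  have reach_s : ∀ t, Relation.ReflTransGen R (Sum.inr s) (Sum.inr t) := by
    intro t
    rcases tri_cases s k hsk t with rfl | rfl | rfl
    · exact .refl
    · exact rtg_pair a1 a2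
    · exact .single a1
  have reach_to_k : ∀ t, Relation.ReflTransGen R (Sum.inr t) (Sum.inr k) := by
    intro t
    rcases tri_cases s k hsk t with rfl | rfl | rfl
    · exact rtg_pair a1 a2
    · exact .refl
    · exact .single a2
  refine master_tri_del hr O s k hsk cyc s k hs hk hO (fun j j' hj hj' => ?_)
    (fun j => ⟨s, hs, reach_s j⟩) (fun j => ⟨k, hk, reach_to_k j⟩)
  rcases in_cases O s k hsk hk hj with rfl | rfl
  · exact reach_s j'
  · rcases out_cases O s k hsk hs hj' with rfl | rfl
    · exact .refl
    · exact .single a2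

lemma lift_del_sq (hs : O.dir (m s) v) (hk : O.dir v (m k)) (hO : IsStrong O.dir)
    (hq : O.dir (m (-(s+k))) v) :
    EdgeDeletable (liftO hr O s k hsk false) (Sum.inr s) (Sum.inr (-(s+k))) := by
  set R := delEdge (liftO hr O s k hsk false).dir (Sum.inr s) (Sum.inr (-(s+k))) with hR
  have ask : R (Sum.inr s) (Sum.inr k) := by
    refine ⟨⟨hsk, Or.inl rfl⟩, ?_⟩
    rintro (⟨-, h⟩ | ⟨h, -⟩)
    · exact q_ne_k s k hsk (Sum.inr.inj h).symm
    · exact q_ne_s s k hsk (Sum.inr.inj h).symm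
  have aqk : R (Sum.inr (-(s+k))) (Sum.inr k) := by
    refine ⟨⟨q_ne_k s k hsk, Or.inr rfl⟩, ?_⟩
    rintro (⟨h, -⟩ | ⟨-, h⟩)
    · exact q_ne_s s k hsk (Sum.inr.inj h)
    · exact hsk.symm (Sum.inr.inj h)
  refine master_tri_del hr O s k hsk false s (-(s+k)) hs hk hO (fun j j' hj hj' => ?_)
    (fun j => ?_) (fun j => ?_)
  · have hoc := out_cases O s k hsk hs hj'
    rcases in_cases O s k hsk hk hj with rfl | rfl
    · rcases hoc with rfl | rfl
      · exact absurd hj' (O.not_both _ _ hq)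
      · exact .single ask
    · rcases hoc with rfl | rfl
      · exact absurd hj' (O.not_both _ _ hq)
      · exact .single aqk
  · rcases tri_cases s k hsk j with rfl | rfl | rfl
    · exact ⟨_, hs, .refl⟩
    · exact ⟨_, hs, .single ask⟩
    · exact ⟨_, hq, .refl⟩
  · rcases tri_cases s k hsk j with rfl | rfl | rfl
    · exact ⟨_, hk, .single ask⟩
    · exact ⟨_, hk, .refl⟩
    · exact ⟨_, hk, .single aqk⟩

lemma lift_del_qk (hs : O.dir (m s) v) (hk : O.dir v (m k)) (hO : IsStrong O.dir)
    (hq : O.dir v (m (-(s+k)))) :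
    EdgeDeletable (liftO hr O s k hsk false) (Sum.inr (-(s+k))) (Sum.inr k) := by
  set R := delEdge (liftO hr O s k hsk false).dir (Sum.inr (-(s+k))) (Sum.inr k) with hR
  have asq : R (Sum.inr s) (Sum.inr (-(s+k))) := by
    refine ⟨⟨fun h => q_ne_s s k hsk h.symm, Or.inl rfl⟩, ?_⟩
    rintro (⟨h, -⟩ | ⟨h, -⟩)
    · exact q_ne_s s k hsk (Sum.inr.inj h).symm
    · exact hsk (Sum.inr.inj h)
  have ask : R (Sum.inr s) (Sum.inr k) := by
    refine ⟨⟨hsk, Or.inl rfl⟩, ?_⟩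
    rintro (⟨h, -⟩ | ⟨h, -⟩)
    · exact q_ne_s s k hsk (Sum.inr.inj h).symm
    · exact hsk (Sum.inr.inj h)
  refine master_tri_del hr O s k hsk false (-(s+k)) k hs hk hO (fun j j' hj hj' => ?_)
    (fun j => ?_) (fun j => ?_)
  · have hoc := out_cases O s k hsk hs hj'
    rcases in_cases O s k hsk hk hj with rfl | rfl
    · rcases hoc with rfl | rfl
      · exact .single asq
      · exact .single ask
    · exact absurd hq (O.not_both _ _ hj)
  · rcases tri_cases s k hsk j with rfl | rfl | rfl
    · exact ⟨_, hs, .refl⟩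
    · exact ⟨_, hs, .single ask⟩
    · exact ⟨_, hs, .single asq⟩
  · rcases tri_cases s k hsk j with rfl | rfl | rfl
    · exact ⟨_, hk, .single ask⟩
    · exact ⟨_, hk, .refl⟩
    · exact ⟨_, hq, .refl⟩

end TriDel

/-! ### Contraction: from an orientation of the modification back to `G` -/

section Contract
variable (hr : Set.range m = G.neighborSet v) (hm : Function.Injective m)

def cDir (O' : Orient GV) (a b : V) : Prop :=
  (∃ (ha : a ≠ v) (hb : b ≠ v), O'.dir (Sum.inl ⟨a, ha⟩) (Sum.inl ⟨b, hb⟩)) ∨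
  (∃ (hb : b ≠ v) (i : ZMod 3), a = v ∧ b = m i ∧ O'.dir (Sum.inr i) (Sum.inl ⟨b, hb⟩)) ∨
  (∃ (ha : a ≠ v) (i : ZMod 3), b = v ∧ a = m i ∧ O'.dir (Sum.inl ⟨a, ha⟩) (Sum.inr i))

def contract (O' : Orient GV) : Orient G where
  dir := cDir O'
  dir_iff := by
    intro a b
    constructor
    · rintro ((⟨ha, hb, d⟩ | ⟨hb, i, rfl, rfl, d⟩ | ⟨ha, i, rfl, rfl, d⟩) |
              (⟨hb, ha, d⟩ | ⟨ha, i, rfl, rfl, d⟩ | ⟨hb, i, rfl, rfl, d⟩))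
      · exact lcm_adj_inl_inl.mp ((O'.dir_iff _ _).mp (Or.inl d))
      · exact (adj_m hr i).symm
      · exact adj_m hr i
      · exact lcm_adj_inl_inl.mp ((O'.dir_iff _ _).mp (Or.inl d)) |>.symm
      · exact adj_m hr i |>.symm.symm
      · exact (adj_m hr i).symm.symm.symm
    · intro hadj
      by_cases ha : v = a
      · subst ha
        have hbv : b ≠ v := fun he => G.irrefl (he ▸ hadj)
        obtain ⟨i, rfl⟩ := adj_v_eq_m hr hadj.symm
        rcases (O'.dir_iff (Sum.inr i) (Sum.inl ⟨m i, hbv⟩)).mpr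
            (lcm_adj_inr_inl.mpr rfl) with d | d
        · exact Or.inl (Or.inr (Or.inl ⟨hbv, i, rfl, rfl, d⟩))
        · exact Or.inr (Or.inr (Or.inr ⟨hbv, i, rfl, rfl, d⟩))
      · have ha' : a ≠ v := fun h => ha h.symm
        by_cases hb : v = b
        · subst hb
          obtain ⟨i, rfl⟩ := adj_v_eq_m hr hadj
          rcases (O'.dir_iff (Sum.inl ⟨m i, ha'⟩) (Sum.inr i)).mpr
              (lcm_adj_inl_inr.mpr rfl) with d | d
          · exact Or.inl (Or.inr (Or.inr ⟨ha', i, rfl, rfl, d⟩))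
          · exact Or.inr (Or.inr (Or.inl ⟨ha', i, rfl, rfl, d⟩))
        · have hb' : b ≠ v := fun h => hb h.symm
          rcases (O'.dir_iff (Sum.inl ⟨a, ha'⟩) (Sum.inl ⟨b, hb'⟩)).mpr
              (lcm_adj_inl_inl.mpr hadj) with d | d
          · exact Or.inl (Or.inl ⟨ha', hb', d⟩)
          · exact Or.inr (Or.inl ⟨hb', ha', d⟩)
  not_both := by
    intro a b h1 h2
    rcases h1 with ⟨ha, hb, d⟩ | ⟨hb, i, rfl, rfl, d⟩ | ⟨ha, i, rfl, rfl, d⟩ <;>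
      rcases h2 with ⟨hb', ha', d'⟩ | ⟨ha', i', he1, he2, d'⟩ | ⟨hb', i', he1, he2, d'⟩
    · exact O'.not_both _ _ d d'
    · exact hb he1
    · exact ha he1
    · exact ha' rfl
    · exact hb he1
    · cases hm he2
      exact O'.not_both _ _ d d'
    · exact hb' rfl
    · cases hm he2
      exact O'.not_both _ _ d d'
    · exact ha he1

/-- The projection map. -/
def Fproj : W → V := Sum.elim Subtype.val (fun _ => v)

lemma contract_strong (O' : Orient GV) (hO' : IsStrong O'.dir) :
    IsStrong (contract (G := G) (v := v) (m := m) hr hm O').dir := by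
  have hom : ∀ x y : W, O'.dir x y →
      Relation.ReflTransGen (cDir (G := G) (v := v) (m := m) O') (Fproj x) (Fproj y) := by
    rintro (p | i) (p' | j) d
    · exact .single (Or.inl ⟨p.2, p'.2, d⟩)
    · have hpm : p.1 = m j := lcm_adj_inl_inr.mp ((O'.dir_iff _ _).mp (Or.inl d))
      exact .single (Or.inr (Or.inr ⟨p.2, j, rfl, hpm, d⟩))
    · have hpm : p'.1 = m i := lcm_adj_inr_inl.mp ((O'.dir_iff _ _).mp (Or.inl d))
      exact .single (Or.inr (Or.inl ⟨p'.2, i, rfl, hpm, d⟩))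
    · exact .refl
  intro a b
  classical
  set g : V → W := fun a => if h : a = v then Sum.inr 0 else Sum.inl ⟨a, h⟩ with hg
  have hFg : ∀ a, Fproj (g a) = a := by
    intro a; by_cases h : a = v <;> simp [hg, h, Fproj]
  have := rtg_mono_lift (Fproj (v := v)) hom (hO' (g a) (g b))
  rwa [hFg, hFg] at this

lemma contract_del_old (O' : Orient GV) (p p' : {w : V // w ≠ v})
    (hdel : EdgeDeletable O' (Sum.inl p) (Sum.inl p')) :
    EdgeDeletable (contract (G := G) (v := v) (m := m) hr hm O') p.1 p'.1 := by
  have hom : ∀ x y : W, delEdge O'.dir (Sum.inl p) (Sum.inl p') x y →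
      Relation.ReflTransGen (delEdge (cDir (G := G) (v := v) (m := m) O') p.1 p'.1)
        (Fproj x) (Fproj y) := by
    rintro (q | i) (q' | j) ⟨d, hnd⟩
    · refine .single ⟨Or.inl ⟨q.2, q'.2, d⟩, ?_⟩
      rintro (⟨h1, h2⟩ | ⟨h1, h2⟩)
      · exact hnd (Or.inl ⟨by rw [Sum.inl.injEq]; exact Subtype.ext h1,
          by rw [Sum.inl.injEq]; exact Subtype.ext h2⟩)
      · exact hnd (Or.inr ⟨by rw [Sum.inl.injEq]; exact Subtype.ext h1,
          by rw [Sum.inl.injEq]; exact Subtype.ext h2⟩)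
    · have hpm : q.1 = m j := lcm_adj_inl_inr.mp ((O'.dir_iff _ _).mp (Or.inl d))
      refine .single ⟨Or.inr (Or.inr ⟨q.2, j, rfl, hpm, d⟩), ?_⟩
      rintro (⟨-, h2⟩ | ⟨-, h2⟩)
      · exact p'.2 h2.symm
      · exact p.2 h2.symm
    · have hpm : q'.1 = m i := lcm_adj_inr_inl.mp ((O'.dir_iff _ _).mp (Or.inl d))
      refine .single ⟨Or.inr (Or.inl ⟨q'.2, i, rfl, hpm, d⟩), ?_⟩
      rintro (⟨h1, -⟩ | ⟨h1, -⟩)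
      · exact p.2 h1.symm
      · exact p'.2 h1.symm
    · exact .refl
  intro a b
  classical
  set g : V → W := fun a => if h : a = v then Sum.inr 0 else Sum.inl ⟨a, h⟩ with hg
  have hFg : ∀ a, Fproj (g a) = a := by
    intro a; by_cases h : a = v <;> simp [hg, h, Fproj]
  have := rtg_mono_lift (Fproj (v := v)) hom (hdel (g a) (g b))
  rwa [hFg, hFg] at this

lemma contract_del_pendant (O' : Orient GV) (i : ZMod 3)
    (hdel : EdgeDeletable O' (Sum.inl ⟨m i, m_ne_v hr i⟩) (Sum.inr i)) :
    EdgeDeletable (contract (G := G) (v := v) (m := m) hr hm O') (m i) v := by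
  have hom : ∀ x y : W, delEdge O'.dir (Sum.inl ⟨m i, m_ne_v hr i⟩) (Sum.inr i) x y →
      Relation.ReflTransGen (delEdge (cDir (G := G) (v := v) (m := m) O') (m i) v)
        (Fproj x) (Fproj y) := by
    rintro (q | a) (q' | j) ⟨d, hnd⟩
    · refine .single ⟨Or.inl ⟨q.2, q'.2, d⟩, ?_⟩
      rintro (⟨-, h2⟩ | ⟨h1, -⟩)
      · exact q'.2 h2
      · exact q.2 h1
    · have hpm : q.1 = m j := lcm_adj_inl_inr.mp ((O'.dir_iff _ _).mp (Or.inl d))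
      refine .single ⟨Or.inr (Or.inr ⟨q.2, j, rfl, hpm, d⟩), ?_⟩
      rintro (⟨h1, -⟩ | ⟨h1, -⟩)
      · -- q.1 = m i, so j = i and the arc was the deleted one
        have hji : j = i := hm (hpm.symm.trans h1)
        exact hnd (Or.inl ⟨congrArg Sum.inl (Subtype.ext h1), congrArg Sum.inr hji⟩)
      · exact q.2 h1
    · have hpm : q'.1 = m a := lcm_adj_inr_inl.mp ((O'.dir_iff _ _).mp (Or.inl d))
      refine .single ⟨Or.inr (Or.inl ⟨q'.2, a, rfl, hpm, d⟩), ?_⟩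
      rintro (⟨h1, -⟩ | ⟨-, h2⟩)
      · exact m_ne_v hr i h1.symm
      · have hai : a = i := hm (hpm.symm.trans h2)
        exact hnd (Or.inr ⟨congrArg Sum.inr hai, congrArg Sum.inl (Subtype.ext h2)⟩)
    · exact .refl
  intro a b
  classical
  set g : V → W := fun a => if h : a = v then Sum.inr 0 else Sum.inl ⟨a, h⟩ with hg
  have hFg : ∀ a, Fproj (g a) = a := by
    intro a; by_cases h : a = v <;> simp [hg, h, Fproj]
  have := rtg_mono_lift (Fproj (v := v)) hom (hdel (g a) (g b))
  rwa [hFg, hFg] at this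

end Contract

/-! ### Combinatorial assembly over `ZMod 3` -/

def cov (s t a b : ZMod 3) : Prop := (a = s ∧ b = t) ∨ (a = t ∧ b = s)

instance (s t a b : ZMod 3) : Decidable (cov s t a b) := by unfold cov; infer_instance

lemma zmod3_cases : ∀ i : ZMod 3, i = 0 ∨ i = 1 ∨ i = 2 := by decide

lemma all3 : ∀ c x y t : ZMod 3, c ≠ x → c ≠ y → x ≠ y → (t = c ∨ t = x ∨ t = y) := by decide

lemma mem3 : ∀ c x y t : ZMod 3, c ≠ x → c ≠ y → x ≠ y → t ≠ c → (t = x ∨ t = y) := by decide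

lemma third_eq : ∀ a b c : ZMod 3, a ≠ b → a ≠ c → b ≠ c → -(a+b) = c := by decide

lemma cover3 : ∀ c u w a b : ZMod 3, c ≠ u → c ≠ w → u ≠ w → a ≠ b →
    (cov c u a b ∨ cov u w a b ∨ cov c w a b) := by decide

lemma cov_comp : ∀ s t c u a b : ZMod 3, cov s t c u → cov c u a b → cov s t a b := by decide

lemma part3 (P : ZMod 3 → Prop) (h1 : ∃ i, P i) (h2 : ∃ i, ¬ P i) :
    ∃ c x y : ZMod 3, c ≠ x ∧ c ≠ y ∧ x ≠ y ∧
      ((P c ∧ ¬P x ∧ ¬P y) ∨ (¬P c ∧ P x ∧ P y)) := by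
  by_cases p0 : P 0 <;> by_cases p1 : P 1 <;> by_cases p2 : P 2
  · obtain ⟨i, hi⟩ := h2; rcases zmod3_cases i with rfl | rfl | rfl <;> tauto
  · exact ⟨2, 0, 1, by decide, by decide, by decide, Or.inr ⟨p2, p0, p1⟩⟩
  · exact ⟨1, 0, 2, by decide, by decide, by decide, Or.inr ⟨p1, p0, p2⟩⟩
  · exact ⟨0, 1, 2, by decide, by decide, by decide, Or.inl ⟨p0, p1, p2⟩⟩
  · exact ⟨0, 1, 2, by decide, by decide, by decide, Or.inr ⟨p0, p1, p2⟩⟩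
  · exact ⟨1, 0, 2, by decide, by decide, by decide, Or.inl ⟨p1, p0, p2⟩⟩
  · exact ⟨2, 0, 1, by decide, by decide, by decide, Or.inl ⟨p2, p0, p1⟩⟩
  · obtain ⟨i, hi⟩ := h1; rcases zmod3_cases i with rfl | rfl | rfl <;> tauto

lemma i_ne_c (P : ZMod 3 → Prop) {c x y i : ZMod 3} (hcx : c ≠ x) (hcy : c ≠ y) (hxy : x ≠ y)
    (hcase : (P c ∧ ¬P x ∧ ¬P y) ∨ (¬P c ∧ P x ∧ P y))
    (h1 : ∃ a, a ≠ i ∧ P a) (h2 : ∃ a, a ≠ i ∧ ¬ P a) : i ≠ c := by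
  intro he
  rcases hcase with ⟨hPc, hPx, hPy⟩ | ⟨hPc, hPx, hPy⟩
  · obtain ⟨a, hne, hPa⟩ := h1
    rcases mem3 c x y a hcx hcy hxy (fun hh => hne (hh.trans he.symm)) with rfl | rfl <;> tauto
  · obtain ⟨a, hne, hPa⟩ := h2
    rcases mem3 c x y a hcx hcy hxy (fun hh => hne (hh.trans he.symm)) with rfl | rfl <;> tauto

lemma nc_choice (P : ZMod 3 → Prop)
    (i : ZMod 3) (hi1 : ∃ a, a ≠ i ∧ P a) (hi2 : ∃ a, a ≠ i ∧ ¬ P a) :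
    ∃ s t : ZMod 3, P s ∧ ¬ P t ∧ s ≠ t ∧ -(s + t) = i := by
  obtain ⟨a, hai, hPa⟩ := hi1
  obtain ⟨b, hbi, hPb⟩ := hi2
  have hab : a ≠ b := fun he => hPb (he ▸ hPa)
  exact ⟨a, b, hPa, hPb, hab, third_eq a b i hab hai hbi⟩

/-- Assembly conclusion: a choice of lift parameters for each index. -/
def AsmConcl {k : ℕ} (P D : Fin k → ZMod 3 → Prop) : Prop :=
  ∃ (s t : Fin k → ZMod 3) (cyc : Fin k → Bool),
    (∀ j, P j (s j)) ∧ (∀ j, ¬ P j (t j)) ∧ (∀ j, s j ≠ t j) ∧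
    (∀ i, ∃ j, D j i ∧ (cyc j = true ∨ i = -(s j + t j))) ∧
    (∀ a b : ZMod 3, a ≠ b → ∃ j,
      cov (s j) (t j) a b ∨
      (cyc j = false ∧ ((P j (-(s j + t j)) ∧ cov (s j) (-(s j + t j)) a b) ∨
        (¬ P j (-(s j + t j)) ∧ cov (-(s j + t j)) (t j) a b))))

lemma cov_of_compl : ∀ s t q a b : ZMod 3, -(s+t) = q → -(a+b) = q → s ≠ t → a ≠ b →
    cov s t a b := by decide

lemma realize_split (P : ZMod 3 → Prop) {cA xA yA e : ZMod 3}
    (hc1 : cA ≠ xA) (hc2 : cA ≠ yA) (hc3 : xA ≠ yA)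
    (hcase : (P cA ∧ ¬P xA ∧ ¬P yA) ∨ (¬P cA ∧ P xA ∧ P yA))
    (he : e ≠ cA) :
    ∃ sA tA, P sA ∧ ¬ P tA ∧ cov sA tA cA e := by
  rcases hcase with ⟨h1, h2, h3⟩ | ⟨h1, h2, h3⟩
  · refine ⟨cA, e, h1, ?_, Or.inl ⟨rfl, rfl⟩⟩
    rcases mem3 cA xA yA e hc1 hc2 hc3 he with h | h
    · rw [h]; exact h2
    · rw [h]; exact h3
  · refine ⟨e, cA, ?_, h1, Or.inr ⟨rfl, rfl⟩⟩
    rcases mem3 cA xA yA e hc1 hc2 hc3 he with h | h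
    · rw [h]; exact h2
    · rw [h]; exact h3

lemma caseI_core {k : ℕ} (P D : Fin k → ZMod 3 → Prop)
    (hP : ∀ j, ∃ i, P j i) (hP' : ∀ j, ∃ i, ¬ P j i)
    (j0 j1 : Fin k) (hne : j1 ≠ j0)
    (c u w : ZMod 3) (hcu : c ≠ u) (hcw : c ≠ w) (huw : u ≠ w)
    (s0 t0 : ZMod 3) (hs0 : P j0 s0) (ht0 : ¬ P j0 t0) (hcov0 : cov s0 t0 c u)
    (hq : (P j0 w ∧ cov s0 w u w) ∨ (¬ P j0 w ∧ cov w t0 u w))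
    (s1 t1 : ZMod 3) (hs1 : P j1 s1) (ht1 : ¬ P j1 t1) (hcov1 : cov s1 t1 c w)
    (hDall : ∀ i, ∃ j, j ≠ j0 ∧ D j i) :
    AsmConcl P D := by
  classical
  set sf : Fin k → ZMod 3 :=
    fun j => if j = j0 then s0 else if j = j1 then s1 else Classical.choose (hP j) with hsf
  set tf : Fin k → ZMod 3 :=
    fun j => if j = j0 then t0 else if j = j1 then t1 else Classical.choose (hP' j) with htf
  set cf : Fin k → Bool := fun j => if j = j0 then false else true with hcf
  have hsf0 : sf j0 = s0 := by simp [hsf]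
  have htf0 : tf j0 = t0 := by simp [htf]
  have hsf1 : sf j1 = s1 := by simp [hsf, hne]
  have htf1 : tf j1 = t1 := by simp [htf, hne]
  have hcf0 : cf j0 = false := by simp [hcf]
  refine ⟨sf, tf, cf, ?_, ?_, ?_, ?_, ?_⟩
  · intro j
    by_cases h0 : j = j0
    · rw [h0, hsf0]; exact hs0
    · by_cases h1 : j = j1
      · rw [h1, hsf1]; exact hs1
      · have hh : sf j = Classical.choose (hP j) := by simp [hsf, h0, h1]
        rw [hh]; exact Classical.choose_spec (hP j)
  · intro j
    by_cases h0 : j = j0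
    · rw [h0, htf0]; exact ht0
    · by_cases h1 : j = j1
      · rw [h1, htf1]; exact ht1
      · have hh : tf j = Classical.choose (hP' j) := by simp [htf, h0, h1]
        rw [hh]; exact Classical.choose_spec (hP' j)
  · intro j
    by_cases h0 : j = j0
    · rw [h0, hsf0, htf0]; exact fun he => ht0 (he ▸ hs0)
    · by_cases h1 : j = j1
      · rw [h1, hsf1, htf1]; exact fun he => ht1 (he ▸ hs1)
      · have hh : sf j = Classical.choose (hP j) := by simp [hsf, h0, h1]
        have hh' : tf j = Classical.choose (hP' j) := by simp [htf, h0, h1]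
        rw [hh, hh']
        exact fun he => (Classical.choose_spec (hP' j)) (he ▸ Classical.choose_spec (hP j))
  · intro i
    obtain ⟨j, hjne, hD⟩ := hDall i
    refine ⟨j, hD, Or.inl ?_⟩
    simp [hcf, hjne]
  · intro a b hab
    rcases cover3 c u w a b hcu hcw huw hab with h | h | h
    · exact ⟨j0, Or.inl (by rw [hsf0, htf0]; exact cov_comp _ _ _ _ _ _ hcov0 h)⟩
    · refine ⟨j0, Or.inr ⟨hcf0, ?_⟩⟩
      have hsum : -(sf j0 + tf j0) = w := by
        rw [hsf0, htf0]
        rcases hcov0 with ⟨rfl, rfl⟩ | ⟨rfl, rfl⟩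
        · exact third_eq c u w hcu hcw huw
        · rw [add_comm]; exact third_eq c u w hcu hcw huw
      rw [hsum, hsf0, htf0]
      rcases hq with ⟨hPw, hc⟩ | ⟨hPw, hc⟩
      · exact Or.inl ⟨hPw, cov_comp _ _ _ _ _ _ hc h⟩
      · exact Or.inr ⟨hPw, cov_comp _ _ _ _ _ _ hc h⟩
    · exact ⟨j1, Or.inl (by rw [hsf1, htf1]; exact cov_comp _ _ _ _ _ _ hcov1 h)⟩

lemma caseII2_core {k : ℕ} (P D : Fin k → ZMod 3 → Prop)
    (hP : ∀ j, ∃ i, P j i) (hP' : ∀ j, ∃ i, ¬ P j i)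
    (A B : Fin k) (hAB : A ≠ B)
    (iA iB z : ZMod 3) (hAiB : iA ≠ iB) (hzA : z ≠ iA) (hzB : z ≠ iB)
    (hDA : D A iA) (hDAz : D A z) (hDB : D B iB)
    (hD2 : ∀ j i, D j i → (∃ a, a ≠ i ∧ P j a) ∧ (∃ a, a ≠ i ∧ ¬ P j a))
    (hall : ∀ i, i = iA ∨ i = iB ∨ i = z) :
    AsmConcl P D := by
  classical
  obtain ⟨sB, tB, hPsB, hPtB, hsbt, hqB⟩ :=
    nc_choice (P B) iB (hD2 B iB hDB).1 (hD2 B iB hDB).2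
  have hiBsB : iB ≠ sB := fun he => q_ne_s sB tB hsbt (hqB.trans he)
  have hiBtB : iB ≠ tB := fun he => q_ne_k sB tB hsbt (hqB.trans he)
  obtain ⟨cA, xA, yA, hc1, hc2, hc3, hcaseA⟩ := part3 (P A) (hP A) (hP' A)
  have hiAcA : iA ≠ cA := i_ne_c (P A) hc1 hc2 hc3 hcaseA (hD2 A iA hDA).1 (hD2 A iA hDA).2
  have hzcA : z ≠ cA := i_ne_c (P A) hc1 hc2 hc3 hcaseA (hD2 A z hDAz).1 (hD2 A z hDAz).2
  have hcAiB : cA = iB := by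
    rcases hall cA with h | h | h
    · exact absurd h.symm hiAcA
    · exact h
    · exact absurd h.symm hzcA
  -- the partner f of the A-edge {iB, f} : whichever of sB/tB the q-clause of B misses
  by_cases hPiB : P B iB
  · -- q-clause of B covers {sB, iB}; A must cover {iB, tB}
    have hfA : tB ≠ cA := fun he => hiBtB (he.trans hcAiB).symm
    obtain ⟨sA, tA, hPsA, hPtA, hcovA⟩ := realize_split (P A) hc1 hc2 hc3 hcaseA hfA
    have hcovA' : cov sA tA iB tB := hcAiB ▸ hcovA
    set sf : Fin k → ZMod 3 :=
      fun j => if j = A then sA else if j = B then sB else Classical.choose (hP j) with hsf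
    set tf : Fin k → ZMod 3 :=
      fun j => if j = A then tA else if j = B then tB else Classical.choose (hP' j) with htf
    set cf : Fin k → Bool := fun j => if j = B then false else true with hcf
    have hsfA : sf A = sA := by simp [hsf]
    have htfA : tf A = tA := by simp [htf]
    have hsfB : sf B = sB := by simp [hsf, Ne.symm hAB]
    have htfB : tf B = tB := by simp [htf, Ne.symm hAB]
    have hcfB : cf B = false := by simp [hcf]
    refine ⟨sf, tf, cf, ?_, ?_, ?_, ?_, ?_⟩
    · intro j
      by_cases h0 : j = A
      · rw [h0, hsfA]; exact hPsA
      · by_cases h1 : j = B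
        · rw [h1, hsfB]; exact hPsB
        · have hh : sf j = Classical.choose (hP j) := by simp [hsf, h0, h1]
          rw [hh]; exact Classical.choose_spec (hP j)
    · intro j
      by_cases h0 : j = A
      · rw [h0, htfA]; exact hPtA
      · by_cases h1 : j = B
        · rw [h1, htfB]; exact hPtB
        · have hh : tf j = Classical.choose (hP' j) := by simp [htf, h0, h1]
          rw [hh]; exact Classical.choose_spec (hP' j)
    · intro j
      by_cases h0 : j = A
      · rw [h0, hsfA, htfA]; exact fun he => hPtA (he ▸ hPsA)
      · by_cases h1 : j = B
        · rw [h1, hsfB, htfB]; exact hsbt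
        · have hh : sf j = Classical.choose (hP j) := by simp [hsf, h0, h1]
          have hh' : tf j = Classical.choose (hP' j) := by simp [htf, h0, h1]
          rw [hh, hh']
          exact fun he => (Classical.choose_spec (hP' j)) (he ▸ Classical.choose_spec (hP j))
    · intro i
      rcases hall i with rfl | rfl | rfl
      · exact ⟨A, hDA, Or.inl (by simp [hcf, hAB])⟩
      · refine ⟨B, hDB, Or.inr ?_⟩
        rw [hsfB, htfB, hqB]
      · exact ⟨A, hDAz, Or.inl (by simp [hcf, hAB])⟩
    · intro a b hab
      rcases cover3 iB sB tB a b hiBsB hiBtB hsbt hab with h | h | h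
      · refine ⟨B, Or.inr ⟨hcfB, ?_⟩⟩
        rw [hsfB, htfB, hqB]
        exact Or.inl ⟨hPiB, cov_comp _ _ _ _ _ _ (Or.inr ⟨rfl, rfl⟩) h⟩
      · refine ⟨B, Or.inl ?_⟩
        rw [hsfB, htfB]; exact h
      · refine ⟨A, Or.inl ?_⟩
        rw [hsfA, htfA]; exact cov_comp _ _ _ _ _ _ hcovA' h
  · -- q-clause of B covers {iB, tB}; A must cover {iB, sB}
    have hfA : sB ≠ cA := fun he => hiBsB (he.trans hcAiB).symm
    obtain ⟨sA, tA, hPsA, hPtA, hcovA⟩ := realize_split (P A) hc1 hc2 hc3 hcaseA hfA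
    have hcovA' : cov sA tA iB sB := hcAiB ▸ hcovA
    set sf : Fin k → ZMod 3 :=
      fun j => if j = A then sA else if j = B then sB else Classical.choose (hP j) with hsf
    set tf : Fin k → ZMod 3 :=
      fun j => if j = A then tA else if j = B then tB else Classical.choose (hP' j) with htf
    set cf : Fin k → Bool := fun j => if j = B then false else true with hcf
    have hsfA : sf A = sA := by simp [hsf]
    have htfA : tf A = tA := by simp [htf]
    have hsfB : sf B = sB := by simp [hsf, Ne.symm hAB]
    have htfB : tf B = tB := by simp [htf, Ne.symm hAB]
    have hcfB : cf B = false := by simp [hcf]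
    refine ⟨sf, tf, cf, ?_, ?_, ?_, ?_, ?_⟩
    · intro j
      by_cases h0 : j = A
      · rw [h0, hsfA]; exact hPsA
      · by_cases h1 : j = B
        · rw [h1, hsfB]; exact hPsB
        · have hh : sf j = Classical.choose (hP j) := by simp [hsf, h0, h1]
          rw [hh]; exact Classical.choose_spec (hP j)
    · intro j
      by_cases h0 : j = A
      · rw [h0, htfA]; exact hPtA
      · by_cases h1 : j = B
        · rw [h1, htfB]; exact hPtB
        · have hh : tf j = Classical.choose (hP' j) := by simp [htf, h0, h1]
          rw [hh]; exact Classical.choose_spec (hP' j)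
    · intro j
      by_cases h0 : j = A
      · rw [h0, hsfA, htfA]; exact fun he => hPtA (he ▸ hPsA)
      · by_cases h1 : j = B
        · rw [h1, hsfB, htfB]; exact hsbt
        · have hh : sf j = Classical.choose (hP j) := by simp [hsf, h0, h1]
          have hh' : tf j = Classical.choose (hP' j) := by simp [htf, h0, h1]
          rw [hh, hh']
          exact fun he => (Classical.choose_spec (hP' j)) (he ▸ Classical.choose_spec (hP j))
    · intro i
      rcases hall i with rfl | rfl | rfl
      · exact ⟨A, hDA, Or.inl (by simp [hcf, hAB])⟩
      · refine ⟨B, hDB, Or.inr ?_⟩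
        rw [hsfB, htfB, hqB]
      · exact ⟨A, hDAz, Or.inl (by simp [hcf, hAB])⟩
    · intro a b hab
      rcases cover3 iB sB tB a b hiBsB hiBtB hsbt hab with h | h | h
      · refine ⟨A, Or.inl ?_⟩
        rw [hsfA, htfA]; exact cov_comp _ _ _ _ _ _ hcovA' h
      · refine ⟨B, Or.inl ?_⟩
        rw [hsfB, htfB]; exact h
      · refine ⟨B, Or.inr ⟨hcfB, ?_⟩⟩
        rw [hsfB, htfB, hqB]
        exact Or.inr ⟨hPiB, h⟩

lemma caseII3_core (P D : Fin 3 → ZMod 3 → Prop)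
    (ii : Fin 3 → ZMod 3) (hinj : Function.Injective ii)
    (hD : ∀ j, D j (ii j))
    (hD2 : ∀ j i, D j i → (∃ a, a ≠ i ∧ P j a) ∧ (∃ a, a ≠ i ∧ ¬ P j a)) :
    AsmConcl P D := by
  classical
  have hsurj : Function.Surjective ii :=
    ((Fintype.bijective_iff_injective_and_card ii).mpr
      ⟨hinj, by simp [ZMod.card]⟩).surjective
  choose sf tf hPs hPt hst hq using
    fun j => nc_choice (P j) (ii j) (hD2 j (ii j) (hD j)).1 (hD2 j (ii j) (hD j)).2
  refine ⟨sf, tf, fun _ => false, hPs, hPt, hst, ?_, ?_⟩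
  · intro i
    obtain ⟨j, rfl⟩ := hsurj i
    exact ⟨j, hD j, Or.inr (hq j).symm⟩
  · intro a b hab
    obtain ⟨j, hj⟩ := hsurj (-(a+b))
    refine ⟨j, Or.inl ?_⟩
    exact cov_of_compl _ _ _ _ _ (hq j) hj.symm (hst j) hab

lemma assembly {k : ℕ} (hk2 : 2 ≤ k) (P D : Fin k → ZMod 3 → Prop)
    (hP : ∀ j, ∃ i, P j i) (hP' : ∀ j, ∃ i, ¬ P j i)
    (hD1 : ∀ i, ∃ j, D j i)
    (hD2 : ∀ j i, D j i → (∃ a, a ≠ i ∧ P j a) ∧ (∃ a, a ≠ i ∧ ¬ P j a)) :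
    AsmConcl P D := by
  classical
  by_cases hI : ∃ j0, ∀ i, ∃ j, j ≠ j0 ∧ D j i
  · obtain ⟨j0, hj0⟩ := hI
    obtain ⟨j1, hne⟩ : ∃ j1 : Fin k, j1 ≠ j0 := by
      refine Fintype.exists_ne_of_one_lt_card ?_ j0
      simpa using (show 1 < k by omega)
    obtain ⟨c, x, y, hc1, hc2, hc3, hcase⟩ := part3 (P j0) (hP j0) (hP' j0)
    obtain ⟨c', x', y', hd1, hd2, hd3, hcase'⟩ := part3 (P j1) (hP j1) (hP' j1)
    rcases all3 c x y c' hc1 hc2 hc3 with hcc | hcc | hcc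
    · -- c' = c : use u := x, w := y ; j1 realizes {c, y}
      have hy : y ≠ c' := fun h => hc2 ((h.trans hcc).symm)
      obtain ⟨s1, t1, hs1, ht1, hcov1⟩ := realize_split (P j1) hd1 hd2 hd3 hcase' hy
      have hcov1' : cov s1 t1 c y := by rw [← hcc]; exact hcov1
      rcases hcase with ⟨h1, h2, h3⟩ | ⟨h1, h2, h3⟩
      · exact caseI_core P D hP hP' j0 j1 hne c x y hc1 hc2 hc3 c x h1 h2
          (Or.inl ⟨rfl, rfl⟩) (Or.inr ⟨h3, Or.inr ⟨rfl, rfl⟩⟩) s1 t1 hs1 ht1 hcov1' hj0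
      · exact caseI_core P D hP hP' j0 j1 hne c x y hc1 hc2 hc3 x c h2 h1
          (Or.inr ⟨rfl, rfl⟩) (Or.inl ⟨h3, Or.inl ⟨rfl, rfl⟩⟩) s1 t1 hs1 ht1 hcov1' hj0
    · -- c' = x : use u := y, w := x ; j1 realizes {c, x} = {c, c'}
      have hcne : c ≠ c' := fun h => hc1 (h.trans hcc)
      obtain ⟨s1, t1, hs1, ht1, hcov1⟩ := realize_split (P j1) hd1 hd2 hd3 hcase' hcne
      have hcov1' : cov s1 t1 c x := by
        have h0 : cov s1 t1 x c := by rw [← hcc]; exact hcov1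
        exact cov_comp _ _ _ _ _ _ h0 (Or.inr ⟨rfl, rfl⟩)
      rcases hcase with ⟨h1, h2, h3⟩ | ⟨h1, h2, h3⟩
      · exact caseI_core P D hP hP' j0 j1 hne c y x hc2 hc1 (Ne.symm hc3) c y h1 h3
          (Or.inl ⟨rfl, rfl⟩) (Or.inr ⟨h2, Or.inr ⟨rfl, rfl⟩⟩) s1 t1 hs1 ht1 hcov1' hj0
      · exact caseI_core P D hP hP' j0 j1 hne c y x hc2 hc1 (Ne.symm hc3) y c h3 h1
          (Or.inr ⟨rfl, rfl⟩) (Or.inl ⟨h2, Or.inl ⟨rfl, rfl⟩⟩) s1 t1 hs1 ht1 hcov1' hj0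
    · -- c' = y : use u := x, w := y ; j1 realizes {c, y} = {c, c'}
      have hcne : c ≠ c' := fun h => hc2 (h.trans hcc)
      obtain ⟨s1, t1, hs1, ht1, hcov1⟩ := realize_split (P j1) hd1 hd2 hd3 hcase' hcne
      have hcov1' : cov s1 t1 c y := by
        have h0 : cov s1 t1 y c := by rw [← hcc]; exact hcov1
        exact cov_comp _ _ _ _ _ _ h0 (Or.inr ⟨rfl, rfl⟩)
      rcases hcase with ⟨h1, h2, h3⟩ | ⟨h1, h2, h3⟩
      · exact caseI_core P D hP hP' j0 j1 hne c x y hc1 hc2 hc3 c x h1 h2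
          (Or.inl ⟨rfl, rfl⟩) (Or.inr ⟨h3, Or.inr ⟨rfl, rfl⟩⟩) s1 t1 hs1 ht1 hcov1' hj0
      · exact caseI_core P D hP hP' j0 j1 hne c x y hc1 hc2 hc3 x c h2 h1
          (Or.inr ⟨rfl, rfl⟩) (Or.inl ⟨h3, Or.inl ⟨rfl, rfl⟩⟩) s1 t1 hs1 ht1 hcov1' hj0
  · have hII : ∀ j0 : Fin k, ∃ i, ∀ j, D j i → j = j0 := by
      intro j0
      by_contra h
      push_neg at h
      refine hI ⟨j0, fun i => ?_⟩
      obtain ⟨j, hDj, hjne⟩ := h i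
      exact ⟨j, hjne, hDj⟩
    choose ii hii using hII
    have hDii : ∀ j, D j (ii j) := by
      intro j
      obtain ⟨j', hj'⟩ := hD1 (ii j)
      exact (hii j j' hj') ▸ hj'
    have hinj : Function.Injective ii := by
      intro a b he
      exact hii b a (he ▸ hDii a)
    have hk3 : k ≤ 3 := by
      have := Fintype.card_le_of_injective ii hinj
      simpa [ZMod.card] using this
    interval_cases k
    · -- k = 2
      have h01 : ii 0 ≠ ii 1 := fun he => (by exact absurd (hinj he) (by decide))
      set z : ZMod 3 := -(ii 0 + ii 1) with hz
      have hz0 : z ≠ ii 0 := q_ne_s _ _ h01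
      have hz1 : z ≠ ii 1 := q_ne_k _ _ h01
      obtain ⟨jz, hjz⟩ := hD1 z
      have hall0 : ∀ i : ZMod 3, i = ii 0 ∨ i = ii 1 ∨ i = z :=
        fun i => all3 (ii 0) (ii 1) z i h01 (Ne.symm hz0) (Ne.symm hz1)
      have hall1 : ∀ i : ZMod 3, i = ii 1 ∨ i = ii 0 ∨ i = z := by
        intro i; rcases hall0 i with h | h | h <;> tauto
      have hjz2 : jz = 0 ∨ jz = 1 := by omega
      rcases hjz2 with rfl0 | rfl1
      · exact caseII2_core P D hP hP' 0 1 (by decide) (ii 0) (ii 1) z h01 hz0 hz1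
          (hDii 0) (rfl0 ▸ hjz) (hDii 1) hD2 hall0
      · exact caseII2_core P D hP hP' 1 0 (by decide) (ii 1) (ii 0) z (Ne.symm h01) hz1 hz0
          (hDii 1) (rfl1 ▸ hjz) (hDii 0) hD2 hall1
    · -- k = 3
      exact caseII3_core P D ii hinj hDii hD2

/-! ### Orientation facts -/

section OFacts

lemma dir_vv (O : Orient G) : ¬ O.dir v v :=
  fun h => G.irrefl ((O.dir_iff v v).mp (Or.inl h))

lemma ins_nonempty (hr : Set.range m = G.neighborSet v) (O : Orient G) (hO : IsStrong O.dir) : ∃ i, O.dir (m i) v := by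
  obtain ⟨a, ha⟩ := exists_last_arc (hO (m 0) v) (m_ne_v hr 0)
  by_cases hav : a = v
  · exact absurd (hav ▸ ha) (dir_vv O)
  · obtain ⟨i, rfl⟩ := adj_v_eq_m hr ((O.dir_iff a v).mp (Or.inl ha))
    exact ⟨i, ha⟩

lemma outs_nonempty (hr : Set.range m = G.neighborSet v) (O : Orient G) (hO : IsStrong O.dir) : ∃ i, O.dir v (m i) := by
  obtain ⟨b, hb⟩ := exists_first_arc (hO v (m 0)) (Ne.symm (m_ne_v hr 0))
  by_cases hbv : b = v
  · exact absurd (hbv ▸ hb) (dir_vv O)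
  · obtain ⟨i, rfl⟩ := adj_v_eq_m hr (((O.dir_iff v b).mp (Or.inl hb)).symm)
    exact ⟨i, hb⟩

lemma pendant_spread (hr : Set.range m = G.neighborSet v) (O : Orient G) (i : ZMod 3) (hdel : EdgeDeletable O (m i) v) :
    (∃ a, a ≠ i ∧ O.dir (m a) v) ∧ (∃ a, a ≠ i ∧ O.dir v (m a)) := by
  constructor
  · obtain ⟨a, ha⟩ := exists_last_arc (hdel (m 0) v) (m_ne_v hr 0)
    have hav : a ≠ v := fun h => dir_vv O (h ▸ ha.1)
    obtain ⟨j, rfl⟩ := adj_v_eq_m hr ((O.dir_iff a v).mp (Or.inl ha.1))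
    exact ⟨j, fun he => ha.2 (Or.inl ⟨by rw [he], rfl⟩), ha.1⟩
  · obtain ⟨b, hb⟩ := exists_first_arc (hdel v (m 0)) (Ne.symm (m_ne_v hr 0))
    have hbv : b ≠ v := fun h => dir_vv O (h ▸ hb.1)
    obtain ⟨j, rfl⟩ := adj_v_eq_m hr (((O.dir_iff v b).mp (Or.inl hb.1)).symm)
    exact ⟨j, fun he => hb.2 (Or.inr ⟨rfl, by rw [he]⟩), hb.1⟩

lemma dir_out_of_not_in (hr : Set.range m = G.neighborSet v) (O : Orient G) (i : ZMod 3) (h : ¬ O.dir (m i) v) :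
    O.dir v (m i) :=
  ((O.dir_iff (m i) v).mpr (adj_m hr i)).resolve_left h

end OFacts

theorem stmt_12 [Fintype V] (G : SimpleGraph V) (h3 : ThreeEdgeConn G) (v : V)
    (m : ZMod 3 → V) (hm : Function.Injective m)
    (hr : Set.range m = G.neighborSet v)
    (h3v : ThreeEdgeConn (localCubicMod G v 3 m)) :
    frankNumber (localCubicMod G v 3 m) ≤ frankNumber G := by
  classical
  by_cases hS : {k | ∃ Os : Fin k → Orient G, (∀ i, IsStrong (Os i).dir) ∧
      ∀ u w, G.Adj u w → ∃ i, EdgeDeletable (Os i) u w}.Nonempty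
  · have hmem : ∃ Os : Fin (frankNumber G) → Orient G, (∀ i, IsStrong (Os i).dir) ∧
        ∀ u w, G.Adj u w → ∃ i, EdgeDeletable (Os i) u w := Nat.sInf_mem hS
    obtain ⟨Os, hstrongs, hcov⟩ := hmem
    have h2K : 2 ≤ frankNumber G := by
      by_contra hlt
      push_neg at hlt
      obtain ⟨j0, -⟩ := hcov (m 0) v (adj_m hr 0)
      have hsub : ∀ a b : Fin (frankNumber G), a = b := by
        intro a b
        have ha := a.isLt
        have hb := b.isLt
        exact Fin.ext (by omega)
      obtain ⟨c, x, y, hc1, hc2, hc3, hcase⟩ := part3 (fun i => (Os j0).dir (m i) v)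
        (ins_nonempty hr (Os j0) (hstrongs j0))
        (by obtain ⟨i, hi⟩ := outs_nonempty hr (Os j0) (hstrongs j0)
            exact ⟨i, (Os j0).not_both _ _ hi⟩)
      obtain ⟨j, hdel⟩ := hcov (m c) v (adj_m hr c)
      rw [hsub j j0] at hdel
      obtain ⟨hsp1, hsp2⟩ := pendant_spread hr (Os j0) c hdel
      exact i_ne_c (fun i => (Os j0).dir (m i) v) hc1 hc2 hc3 hcase hsp1
        ⟨hsp2.choose, hsp2.choose_spec.1, (Os j0).not_both _ _ hsp2.choose_spec.2⟩ rfl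
    have hP : ∀ j : Fin (frankNumber G), ∃ i, (Os j).dir (m i) v :=
      fun j => ins_nonempty hr _ (hstrongs j)
    have hP' : ∀ j : Fin (frankNumber G), ∃ i, ¬ (Os j).dir (m i) v := by
      intro j
      obtain ⟨i, hi⟩ := outs_nonempty hr _ (hstrongs j)
      exact ⟨i, (Os j).not_both _ _ hi⟩
    have hD1 : ∀ i, ∃ j, EdgeDeletable (Os j) (m i) v := fun i => hcov (m i) v (adj_m hr i)
    have hD2 : ∀ (j : Fin (frankNumber G)) i, EdgeDeletable (Os j) (m i) v →
        (∃ a, a ≠ i ∧ (Os j).dir (m a) v) ∧ (∃ a, a ≠ i ∧ ¬ (Os j).dir (m a) v) := by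
      intro j i hd
      obtain ⟨h1, h2⟩ := pendant_spread hr _ i hd
      refine ⟨h1, ?_⟩
      obtain ⟨a, ha1, ha2⟩ := h2
      exact ⟨a, ha1, (Os j).not_both _ _ ha2⟩
    obtain ⟨sf, tf, cyc, hPs, hPt, hst, hpend, hcove⟩ :=
      assembly h2K (fun j i => (Os j).dir (m i) v)
        (fun j i => EdgeDeletable (Os j) (m i) v) hP hP' hD1 hD2
    have hko : ∀ j, (Os j).dir v (m (tf j)) := fun j => dir_out_of_not_in hr _ _ (hPt j)
    refine Nat.sInf_le ⟨fun j => liftO hr (Os j) (sf j) (tf j) (hst j) (cyc j),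
      fun j => lift_strong_s12 hr (Os j) (sf j) (tf j) (hst j) (cyc j) (hPs j) (hko j)
        (hstrongs j), ?_⟩
    rintro (p | a) (p' | b) hadj
    · obtain ⟨j, hd⟩ := hcov p.1 p'.1 (lcm_adj_inl_inl.mp hadj)
      exact ⟨j, lift_del_old hr (Os j) _ _ (hst j) (cyc j) (hPs j) (hko j) p p' hd⟩
    · have hpm : p.1 = m b := lcm_adj_inl_inr.mp hadj
      obtain ⟨j, hDj, hor⟩ := hpend b
      have hres := lift_del_pendant hr (Os j) (sf j) (tf j) (hst j) (cyc j) (hPs j) (hko j)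
        b hDj hor
      have hpe : p = ⟨m b, m_ne_v hr b⟩ := Subtype.ext hpm
      exact ⟨j, by rw [hpe]; exact hres⟩
    · have hpm : p'.1 = m a := lcm_adj_inr_inl.mp hadj
      obtain ⟨j, hDj, hor⟩ := hpend a
      have hres := lift_del_pendant hr (Os j) (sf j) (tf j) (hst j) (cyc j) (hPs j) (hko j)
        a hDj hor
      have hpe : p' = ⟨m a, m_ne_v hr a⟩ := Subtype.ext hpm
      exact ⟨j, by rw [hpe]; exact edgeDeletable_comm hres⟩
    · have hne : a ≠ b := lcm_adj_inr_inr.mp hadj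
      obtain ⟨j, hccase⟩ := hcove a b hne
      rcases hccase with hcv | ⟨hcf, hqc⟩
      · rcases hcv with ⟨rfl, rfl⟩ | ⟨rfl, rfl⟩
        · exact ⟨j, lift_del_sk hr (Os j) _ _ (hst j) (cyc j) (hPs j) (hko j) (hstrongs j)⟩
        · exact ⟨j, edgeDeletable_comm
            (lift_del_sk hr (Os j) _ _ (hst j) (cyc j) (hPs j) (hko j) (hstrongs j))⟩
      · rcases hqc with ⟨hPq, hcv⟩ | ⟨hPq, hcv⟩
        · have hdel := lift_del_sq hr (Os j) (sf j) (tf j) (hst j) (hPs j) (hko j)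
            (hstrongs j) hPq
          rcases hcv with ⟨rfl, rfl⟩ | ⟨rfl, rfl⟩
          · refine ⟨j, ?_⟩
            show EdgeDeletable (liftO hr (Os j) (sf j) (tf j) (hst j) (cyc j)) _ _
            rw [hcf]
            exact hdel
          · refine ⟨j, ?_⟩
            show EdgeDeletable (liftO hr (Os j) (sf j) (tf j) (hst j) (cyc j)) _ _
            rw [hcf]
            exact edgeDeletable_comm hdel
        · have hout : (Os j).dir v (m (-(sf j + tf j))) := dir_out_of_not_in hr _ _ hPq
          have hdel := lift_del_qk hr (Os j) (sf j) (tf j) (hst j) (hPs j) (hko j)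
            (hstrongs j) hout
          rcases hcv with ⟨rfl, rfl⟩ | ⟨rfl, rfl⟩
          · refine ⟨j, ?_⟩
            show EdgeDeletable (liftO hr (Os j) (sf j) (tf j) (hst j) (cyc j)) _ _
            rw [hcf]
            exact hdel
          · refine ⟨j, ?_⟩
            show EdgeDeletable (liftO hr (Os j) (sf j) (tf j) (hst j) (cyc j)) _ _
            rw [hcf]
            exact edgeDeletable_comm hdel
  · have hGV : {k | ∃ Os' : Fin k → Orient (localCubicMod G v 3 m),
        (∀ i, IsStrong (Os' i).dir) ∧
        ∀ u w, (localCubicMod G v 3 m).Adj u w → ∃ i, EdgeDeletable (Os' i) u w} = ∅ := by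
      rw [Set.eq_empty_iff_forall_notMem]
      rintro kk ⟨Os', hst', hcov'⟩
      apply hS
      refine ⟨kk, fun j => contract hr hm (Os' j),
        fun j => contract_strong hr hm (Os' j) (hst' j), ?_⟩
      intro a b hadj
      by_cases ha : a = v
      · have hbv : b ≠ v := fun h => G.ne_of_adj hadj (ha.trans h.symm)
        obtain ⟨i, hbi⟩ := adj_v_eq_m hr (ha ▸ hadj.symm)
        obtain ⟨j, hd⟩ := hcov' (Sum.inl ⟨m i, m_ne_v hr i⟩) (Sum.inr i)
          (lcm_adj_inl_inr.mpr rfl)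
        refine ⟨j, ?_⟩
        rw [ha, hbi]
        exact edgeDeletable_comm (contract_del_pendant hr hm (Os' j) i hd)
      · by_cases hb : b = v
        · obtain ⟨i, hai⟩ := adj_v_eq_m hr (hb ▸ hadj)
          obtain ⟨j, hd⟩ := hcov' (Sum.inl ⟨m i, m_ne_v hr i⟩) (Sum.inr i)
            (lcm_adj_inl_inr.mpr rfl)
          refine ⟨j, ?_⟩
          rw [hai, hb]
          exact contract_del_pendant hr hm (Os' j) i hd
        · obtain ⟨j, hd⟩ := hcov' (Sum.inl ⟨a, ha⟩) (Sum.inl ⟨b, hb⟩)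
            (lcm_adj_inl_inl.mpr hadj)
          exact ⟨j, contract_del_old hr hm (Os' j) ⟨a, ha⟩ ⟨b, hb⟩ hd⟩
    show sInf _ ≤ sInf _
    rw [hGV, Nat.sInf_empty]
    exact Nat.zero_le _


end Sec

end Frank
end
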